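/- arXiv:0706.4201 — 4 statements merged into one kernel-verified Lean document; each statement's English description precedes it below -/
import Mathlib

section
/- Let n≥2 and m_1,…,m_{n−1} be positive integers, and set m_0=1, x_0=1. For t∈ℂ and i∈{1,…,n}, let D_i = t Σ_{r=0}^{i−1} x_r^{m_r} ∂_{x_{r+1}}, an operator on ℂ[x_1,…,x_n]. Each D_i acts locally nilpotently on ℂ[x_1,…,x_n], so for every polynomial p the exponential e^{D_i}(p) = Σ_{k≥0} D_i^k(p)/k! is a finite sum, and θ(D_{n−1})(x_{n−1}^{m_{n−1}}) := Σ_{i≥1} ((−1)^{i−1}/i!) D_{n−1}^{i−1}(x_{n−1}^{m_{n−1}}) is a polynomial (θ(x)=(1−e^{−x})/x). Then the operator identity e^{D_n} = e^{D_{n−1}} ∘ e^{t·θ(D_{n−1})(x_{n−1}^{m_{n−1}}) ∂_{x_n}} holds, i.e., e^{D_n}(p) = e^{D_{n−1}}( e^{t·θ(D_{n−1})(x_{n−1}^{m_{n−1}}) ∂_{x_n}}(p) ) for every p∈ℂ[x_1,…,x_n]. -/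
noncomputable section

attribute [local instance 100] LieRing.ofAssociativeRing

/-- The algebra of linear operators on polynomials in `n` variables (contains the
differential operators with polynomial coefficients). -/
abbrev DiffOp (n : ℕ) : Type := Module.End ℂ (MvPolynomial (Fin n) ℂ)

/-- The partial derivative operator `∂_{x_i}`. -/
noncomputable def pd {n : ℕ} (i : Fin n) : DiffOp n := (MvPolynomial.pderiv i).toLinearMap

/-- The operator of multiplication by `x_i`. -/
noncomputable def mX {n : ℕ} (i : Fin n) : DiffOp n := LinearMap.mulLeft ℂ (MvPolynomial.X i)

/-- The operator of multiplication by the monomial `∏ x_a ^ (j a)`. -/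
noncomputable def mXpow {n : ℕ} (j : Fin n → ℕ) : DiffOp n :=
  LinearMap.mulLeft ℂ (∏ a : Fin n, (MvPolynomial.X a) ^ (j a))

/-- A tree diagram on `n` nodes (nodes `0,…,n-1`, node `0` being the root): every node
`i ≠ 0` has a unique parent `parent i < i`, and the edge `(parent i, i)` carries a
positive integral weight `weight i`. -/
structure TreeDiagram (n : ℕ) [NeZero n] where
  parent : Fin n → Fin n
  parent_lt : ∀ i : Fin n, i ≠ 0 → parent i < i
  weight : Fin n → ℕ
  weight_pos : ∀ i : Fin n, i ≠ 0 → 0 < weight i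

variable {n : ℕ} [NeZero n]

/-- The clan of a node: the set of nodes on the unique path from the root to `i`
(including both ends). -/
def clanSet (T : TreeDiagram n) : Fin n → Finset (Fin n)
  | i => if h : i = 0 then {i} else insert i (clanSet T (T.parent i))
termination_by i => i.val
decreasing_by exact T.parent_lt i h

/-- The product of the weights of all edges along the path from the root to `i`. -/
def chainWt (T : TreeDiagram n) : Fin n → ℕ
  | i => if h : i = 0 then 1 else chainWt T (T.parent i) * T.weight i
termination_by i => i.val
decreasing_by exact T.parent_lt i h

/-- `j` is a descendant of `i`. -/
def Desc (T : TreeDiagram n) (i j : Fin n) : Prop := i ≠ j ∧ i ∈ clanSet T j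

/-- A node is a tip if it has no children. -/
def IsTip (T : TreeDiagram n) (i : Fin n) : Prop := ∀ j : Fin n, j ≠ 0 → T.parent j ≠ i

/-- Generators `∂_{x_1}` and `x_i^{d[(ι_i,ι_j)]} ∂_{x_j}` for edges `(ι_i,ι_j)`. -/
def upGens (T : TreeDiagram n) : Set (DiffOp n) :=
  {pd (0 : Fin n)} ∪ {A | ∃ j : Fin n, j ≠ 0 ∧ A = (mX (T.parent j)) ^ (T.weight j) * pd j}

/-- Generators `∂_{x_r}` for tips `ι_r` and `x_j^{d[(ι_i,ι_j)]} ∂_{x_i}` for edges. -/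
def downGens (T : TreeDiagram n) : Set (DiffOp n) :=
  {A | ∃ r : Fin n, IsTip T r ∧ A = pd r} ∪
    {A | ∃ j : Fin n, j ≠ 0 ∧ A = (mX j) ^ (T.weight j) * pd (T.parent j)}

/-- The upward nilpotent Lie algebra `L_0(T^d)`. -/
def upL0 (T : TreeDiagram n) : LieSubalgebra ℂ (DiffOp n) :=
  LieSubalgebra.lieSpan ℂ _ (upGens T)

/-- The downward nilpotent Lie algebra `ℒ_0(T^d)`. -/
def downL0 (T : TreeDiagram n) : LieSubalgebra ℂ (DiffOp n) :=
  LieSubalgebra.lieSpan ℂ _ (downGens T)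

/-- The toral Cartan subalgebra `H = Σ ℂ x_i ∂_{x_i}`. -/
def Hcart (n : ℕ) : Submodule ℂ (DiffOp n) :=
  Submodule.span ℂ (Set.range fun i : Fin n => mX i * pd i)

/-- `L_1(T^d) = H + L_0(T^d)`. -/
def upL1 (T : TreeDiagram n) : Submodule ℂ (DiffOp n) := Hcart n ⊔ (upL0 T).toSubmodule

/-- `ℒ_1(T^d) = H + ℒ_0(T^d)`. -/
def downL1 (T : TreeDiagram n) : Submodule ℂ (DiffOp n) := Hcart n ⊔ (downL0 T).toSubmodule

/-- `I` is an abelian (Lie) ideal of `L`. -/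
def IsAbelianIdeal (L I : Submodule ℂ (DiffOp n)) : Prop :=
  I ≤ L ∧ (∀ x ∈ L, ∀ y ∈ I, ⁅x, y⁆ ∈ I) ∧ ∀ x ∈ I, ∀ y ∈ I, ⁅x, y⁆ = (0 : DiffOp n)

/-- The lower central series: `lcs L k = G^{k+1}` in the paper's notation
(`G^1 = G`, `G^{i+1} = [G, G^i]`). -/
def lcs (L : LieSubalgebra ℂ (DiffOp n)) : ℕ → Submodule ℂ (DiffOp n)
  | 0 => L.toSubmodule
  | (k+1) => Submodule.span ℂ {z : DiffOp n | ∃ x ∈ L, ∃ y ∈ lcs L k, z = ⁅x, y⁆}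

/-- Membership in `R_i`: exponent tuples supported on the strict ancestors of `i`
(the clan of `i` with `i` removed) with `Σ_a j_a · d_1⋯d_{s(a)-1} ≤ d_1⋯d_{r-1}`. -/
def memR (T : TreeDiagram n) (i : Fin n) (j : Fin n → ℕ) : Prop :=
  (∀ a : Fin n, a ∉ (clanSet T i).erase i → j a = 0) ∧
    ∑ a ∈ (clanSet T i).erase i, j a * chainWt T a ≤ chainWt T i

/-- `ℓ_i`: the number of exponent tuples in `R_i`. -/
def ellCard (T : TreeDiagram n) (i : Fin n) : ℕ := Nat.card {j : Fin n → ℕ // memR T i j}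

/-- A node is multiplicity-free if the edge to its parent has weight 1. -/
def MultFree (T : TreeDiagram n) (i : Fin n) : Prop := i ≠ 0 ∧ T.weight i = 1

/-- `Υ`: the set of nodes all of whose descendants are multiplicity-free. -/
def Upsilon (T : TreeDiagram n) : Set (Fin n) := {i | ∀ j : Fin n, Desc T i j → MultFree T j}

/-- A set of nodes is independent if no element is a descendant of another. -/
def IndepSet (T : TreeDiagram n) (S : Set (Fin n)) : Prop :=
  ∀ a ∈ S, ∀ b ∈ S, ¬ Desc T a b

/-- The ideal `I(S) = Span{x^{j⃗}∂_{x_i}, x^{j⃗}∂_{x_s} : ι_i ∈ S, j⃗ ∈ R_i, ι_s ∈ D_i}`. -/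
def upIdealS (T : TreeDiagram n) (S : Set (Fin n)) : Submodule ℂ (DiffOp n) :=
  Submodule.span ℂ
    {A : DiffOp n | ∃ i ∈ S, ∃ j : Fin n → ℕ, memR T i j ∧
      ∃ s : Fin n, (s = i ∨ Desc T i s) ∧ A = mXpow j * pd s}

/-- The partial order `⪯` on `R_i`. -/
def Rle (T : TreeDiagram n) (i : Fin n) (j l : Fin n → ℕ) : Prop :=
  ∀ b ∈ (clanSet T i).erase i,
    ∑ a ∈ ((clanSet T i).erase i).filter (fun a => b ∈ clanSet T a),
        j a * (chainWt T a / chainWt T b) ≤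
      ∑ a ∈ ((clanSet T i).erase i).filter (fun a => b ∈ clanSet T a),
        l a * (chainWt T a / chainWt T b)

/-- `W = S ∪ ⋃_{ι_i ∈ S} D_i`. -/
def Wset (T : TreeDiagram n) (S : Set (Fin n)) : Set (Fin n) :=
  {r | ∃ i ∈ S, r = i ∨ Desc T i r}

/-- An admissible pair for abelian ideals of `L_1(T^d)`. -/
structure UpAdmiss (n : ℕ) [NeZero n] (T : TreeDiagram n) where
  S : Set (Fin n)
  K : Fin n → Set (Fin n → ℕ)
  S_ne : S.Nonempty
  S_sub : S ⊆ Upsilon T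
  S_indep : IndepSet T S
  K_out : ∀ r : Fin n, r ∉ Wset T S → K r = ∅
  K_mem : ∀ i ∈ S, ∀ r : Fin n, (r = i ∨ Desc T i r) → ∀ j ∈ K r, memR T i j
  K_indep : ∀ i ∈ S, ∀ r : Fin n, (r = i ∨ Desc T i r) →
    ∀ j ∈ K r, ∀ l ∈ K r, Rle T i j l → Rle T i l j
  K_ne : ∀ i ∈ S, (K i).Nonempty
  K_chain : ∀ i ∈ S, ∀ r : Fin n, (r = i ∨ Desc T i r) → ∀ s : Fin n, Desc T r s →
    ∀ j ∈ K r, ∀ l ∈ K s, ¬ (Rle T i l j ∧ ¬ Rle T i j l)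

/-- The abelian ideal `I[S,{K_r}] = Σ_{ι_s∈W} Σ_{j⃗∈K_s} I[s,j⃗]`. -/
def upAdIdeal (T : TreeDiagram n) (P : UpAdmiss n T) : Submodule ℂ (DiffOp n) :=
  Submodule.span ℂ
    {A : DiffOp n | ∃ i ∈ P.S, ∃ s : Fin n, (s = i ∨ Desc T i s) ∧ ∃ j ∈ P.K s,
      ∃ l : Fin n → ℕ, memR T i l ∧ Rle T i l j ∧
        ∃ r : Fin n, (r = s ∨ Desc T s r) ∧ A = mXpow l * pd r}

instance (T : TreeDiagram n) (i : Fin n) : Decidable (IsTip T i) :=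
  decidable_of_iff (∀ j : Fin n, j ≠ 0 → T.parent j ≠ i) Iff.rfl

instance (T : TreeDiagram n) (i j : Fin n) : Decidable (Desc T i j) :=
  decidable_of_iff (i ≠ j ∧ i ∈ clanSet T j) Iff.rfl

/-- `D_i` as a finset. -/
def Dfin (T : TreeDiagram n) (i : Fin n) : Finset (Fin n) :=
  Finset.univ.filter fun j => Desc T i j

/-- `κ_i`: the product of the weights of all edges inside `F_i = {ι_i} ∪ D_i`. -/
def kappa (T : TreeDiagram n) (i : Fin n) : ℕ := ∏ j ∈ Dfin T i, T.weight j

/-- The product of the weights of the edges on the path from `i` to a descendant `j`: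
`∏_{e ∈ E_{i,j}} d(e)`. -/
def pathWt (T : TreeDiagram n) (i j : Fin n) : ℕ :=
  ∏ a ∈ (clanSet T j) \ (clanSet T i), T.weight a

/-- `κ_{i,j} = κ_i / ∏_{e ∈ E_{i,j}} d(e)`. -/
def kappaIS (T : TreeDiagram n) (i j : Fin n) : ℕ := kappa T i / pathWt T i j

/-- Membership in `ℜ_i`: tuples supported on `D_i` with `Σ_s j_s κ_{i,s} ≤ κ_i`. -/
def memcR (T : TreeDiagram n) (i : Fin n) (j : Fin n → ℕ) : Prop :=
  (∀ a : Fin n, ¬ Desc T i a → j a = 0) ∧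
    ∑ a ∈ Dfin T i, j a * kappaIS T i a ≤ kappa T i

/-- The partial order `⪯` on `ℜ_i`. -/
def cRle (T : TreeDiagram n) (i : Fin n) (j l : Fin n → ℕ) : Prop :=
  ∀ m : Fin n, Desc T i m →
    ∑ r ∈ (clanSet T (T.parent m)) \ (clanSet T i), j r * pathWt T r (T.parent m) ≤
      ∑ r ∈ (clanSet T (T.parent m)) \ (clanSet T i), l r * pathWt T r (T.parent m)

/-- `Φ = {ι_1} ∪ {ι_i : all edges inside the clan of `ι_i` have weight 1}`. -/
def PhiSet (T : TreeDiagram n) : Set (Fin n) :=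
  {i | ∀ a ∈ clanSet T i, a ≠ 0 → T.weight a = 1}

/-- `Ω`: the set of children of the root. -/
def OmegaSet (T : TreeDiagram n) : Set (Fin n) := {i | i ≠ 0 ∧ T.parent i = 0}

/-- The ideal `𝓘(S) = Span{x^{j⃗}∂_{x_s} : ι_i ∈ S, j⃗ ∈ ℜ_i, ι_s ∈ C_i}`. -/
def downIdealS (T : TreeDiagram n) (S : Set (Fin n)) : Submodule ℂ (DiffOp n) :=
  Submodule.span ℂ
    {A : DiffOp n | ∃ i ∈ S, ∃ j : Fin n → ℕ, memcR T i j ∧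
      ∃ s ∈ clanSet T i, A = mXpow j * pd s}

/-- An admissible pair for abelian ideals of `ℒ_1(T^d)`. -/
structure DownAdmiss (n : ℕ) [NeZero n] (T : TreeDiagram n) where
  S : Set (Fin n)
  K : Fin n → Fin n → Set (Fin n → ℕ)
  S_ne : S.Nonempty
  S_sub : S ⊆ PhiSet T
  S_indep : IndepSet T S
  K_out : ∀ i r : Fin n, (i ∉ S ∨ r ∉ clanSet T i) → K i r = ∅
  K_mem : ∀ i ∈ S, ∀ r ∈ clanSet T i, ∀ j ∈ K i r, memcR T i j
  K_indep : ∀ i ∈ S, ∀ r ∈ clanSet T i, ∀ j ∈ K i r, ∀ l ∈ K i r,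
    cRle T i j l → cRle T i l j
  K_ne : ∀ i ∈ S, (K i i).Nonempty
  K_cond : ∀ i ∈ S, ∀ s ∈ clanSet T i, ∀ r ∈ clanSet T s, r ≠ s →
    ∀ j ∈ K i r, ∀ l ∈ K i s, ¬ (cRle T i j l ∧ ¬ cRle T i l j)

/-- The abelian ideal `𝓘[S,{𝒦_r}] = Σ_{ι_s∈W} Σ_{j⃗∈𝒦_s} 𝓘[s,j⃗]`. -/
def downAdIdeal (T : TreeDiagram n) (P : DownAdmiss n T) : Submodule ℂ (DiffOp n) :=
  Submodule.span ℂ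
    {A : DiffOp n | ∃ i ∈ P.S, ∃ s ∈ clanSet T i, ∃ j ∈ P.K i s,
      ∃ l : Fin n → ℕ, memcR T s l ∧ cRle T s l j ∧
        ∃ r ∈ clanSet T s, A = mXpow l * pd r}

end

noncomputable section

/-- `A` acts locally nilpotently at `p`. -/
def LocNilpOn {M : Type} [AddCommGroup M] [Module ℂ M] (A : Module.End ℂ M) (p : M) : Prop :=
  ∃ N : ℕ, ∀ k : ℕ, N ≤ k → (A ^ k) p = 0

open scoped Classical in
/-- `e^A(p) = Σ_k A^k(p)/k!`, a finite sum when `A` acts locally nilpotently at `p`. -/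
noncomputable def expApply {M : Type} [AddCommGroup M] [Module ℂ M]
    (A : Module.End ℂ M) (p : M) : M :=
  if h : LocNilpOn A p then
    ∑ k ∈ Finset.range h.choose, ((k.factorial : ℂ))⁻¹ • (A ^ k) p
  else 0

open scoped Classical in
/-- `θ(A)(q) = Σ_{i≥1} ((−1)^{i−1}/i!) A^{i−1}(q)` where `θ(x) = (1−e^{−x})/x`. -/
noncomputable def thetaApply {M : Type} [AddCommGroup M] [Module ℂ M]
    (A : Module.End ℂ M) (q : M) : M :=
  if h : LocNilpOn A q then
    ∑ k ∈ Finset.range h.choose, ((-1 : ℂ) ^ k * (((k + 1).factorial : ℂ))⁻¹) • (A ^ k) q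
  else 0

abbrev DiffOp' (n : ℕ) : Type := Module.End ℂ (MvPolynomial (Fin n) ℂ)

noncomputable def pd' {n : ℕ} (i : Fin n) : DiffOp' n := (MvPolynomial.pderiv i).toLinearMap
noncomputable def mX' {n : ℕ} (i : Fin n) : DiffOp' n := LinearMap.mulLeft ℂ (MvPolynomial.X i)

/-- `D_i = t(∂_{x_1} + Σ_{r=1}^{i-1} x_r^{m_r} ∂_{x_{r+1}})` (0-based indices). -/
noncomputable def DchainOp (n : ℕ) (hn : 0 < n) (m : ℕ → ℕ) (t : ℂ) (i : ℕ) : DiffOp' n :=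
  t • (pd' (⟨0, hn⟩ : Fin n) +
    ∑ k ∈ Finset.univ.filter (fun k : Fin n => 0 < k.val ∧ k.val < i),
      (mX' (⟨k.val - 1, lt_of_le_of_lt (Nat.sub_le _ _) k.isLt⟩ : Fin n)) ^ (m k.val) * pd' k)

/-- `η_{j+1}` of the chain: `η_1(t) = t`, `η_{j+2}(t) = ∫_0^t (x_{j+1} + η_{j+1}(y))^{m_{j+1}} dy`. -/
noncomputable def etaChain (m : ℕ → ℕ) (x : ℕ → ℝ) : ℕ → ℝ → ℝ
  | 0 => fun t => t
  | (j+1) => fun t => ∫ y in (0:ℝ)..t, (x j + etaChain m x j y) ^ (m (j+1))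

/-- `ξ̃_{n-k}` of the chain (reversed indexing):
`ξ̃_n(t) = t w_n^{m_n}`, `ξ̃_i(t) = ∫_0^t (w_i + ξ̃_{i+1}(y))^{m_i} dy`. -/
noncomputable def xiRev (n : ℕ) (m : ℕ → ℕ) (w : ℕ → ℂ) : ℕ → ℝ → ℂ
  | 0 => fun t => (t : ℂ) * (w (n-1)) ^ (m n)
  | (k+1) => fun t => ∫ y in (0:ℝ)..t, (w (n-k-2) + xiRev n m w k y) ^ (m (n-k-1))

/-- Formal antiderivative `∫_0^t` of a polynomial. -/
noncomputable def polyInt (p : Polynomial ℂ) : Polynomial ℂ :=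
  p.sum fun k a => Polynomial.C (a / (k + 1)) * Polynomial.X ^ (k + 1)

/-- Coefficient-wise antiderivative of a polynomial in the commuting symbols `∂_{x_i}`
with coefficients polynomial in `t`. -/
noncomputable def mvPolyInt {n : ℕ} (q : MvPolynomial (Fin n) (Polynomial ℂ)) :
    MvPolynomial (Fin n) (Polynomial ℂ) :=
  ∑ d ∈ q.support, MvPolynomial.monomial d (polyInt (q.coeff d))

/-- Interpretation of a commutative polynomial in the symbols `∂_{x_i}` as a
constant-coefficient differential operator. -/
noncomputable def opOfDeriv {n : ℕ} (P : MvPolynomial (Fin n) ℂ) : DiffOp' n :=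
  ∑ d ∈ P.support, P.coeff d • ((List.finRange n).map fun a => pd' a ^ d a).prod

/-- `(Σ a_k x^k)` coefficients of the Campbell–Hausdorff formula. -/
noncomputable def aCH : ℕ → ℚ
  | 0 => 1
  | (k+1) => ∑ mm ∈ Finset.Icc 1 (k+2), ((-1 : ℚ)) ^ (mm - 1) / mm *
      ∑ p ∈ Finset.Nat.antidiagonalTuple mm (k + 2 - mm),
        ((∏ i : Fin mm, (if i.val = mm - 1 then (p i).factorial
          else ((p i) + 1).factorial : ℕ) : ℕ) : ℚ)⁻¹

end

noncomputable section
variable {n : ℕ} [NeZero n]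

/-- `η_i(t)` for a tree: `η_1(t) = t`,
`η_i(t) = ∫_0^t (x_{p(i)} + η_{p(i)}(y))^{d[(ι_{p(i)},ι_i)]} dy`. -/
noncomputable def etaTree (T : TreeDiagram n) (x : Fin n → ℝ) : Fin n → ℝ → ℝ
  | i => if h : i = 0 then fun t => t
      else fun t => ∫ y in (0:ℝ)..t, (x (T.parent i) + etaTree T x (T.parent i) y) ^ (T.weight i)
termination_by i => i.val
decreasing_by exact T.parent_lt i h

/-- The children of a node. -/
def childFinset (T : TreeDiagram n) (i : Fin n) : Finset (Fin n) :=
  Finset.univ.filter fun s : Fin n => s ≠ 0 ∧ T.parent s = i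

/-- `ξ̃_i(t)` as a polynomial in the commuting symbols `∂_{x_j}` (the variables of the
`MvPolynomial`) with coefficients polynomial in `t`:
`ξ̃_r(t) = t ∂_{x_r}^{m_r}` for tips, and
`ξ̃_i(t) = ∫_0^t (∂_{x_i} + Σ_{ι_s∈Θ_i} ξ̃_s(y))^{m_i} dy` otherwise. -/
noncomputable def xiTree (T : TreeDiagram n) (m : Fin n → ℕ) :
    Fin n → MvPolynomial (Fin n) (Polynomial ℂ)
  | i =>
    if IsTip T i then MvPolynomial.C Polynomial.X * (MvPolynomial.X i) ^ (m i)
    else mvPolyInt ((MvPolynomial.X i +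
      ∑ s ∈ (childFinset T i).attach, xiTree T m s.1) ^ (m i))
termination_by i => n - i.val
decreasing_by
  have hs := s.2
  simp only [childFinset, Finset.mem_filter, Finset.mem_univ, true_and] at hs
  have h1 : T.parent s.1 < s.1 := T.parent_lt s.1 hs.1
  rw [hs.2] at h1
  have h2 := s.1.isLt
  have h3 : i.val < s.1.val := h1
  omega

/-- The operator `ξ_i`: `ξ_1 = ξ̃_1(t)` and `ξ_i = x_{p(i)}·ξ̃_i(t)` for `i ≥ 2`. -/
noncomputable def xiFull (T : TreeDiagram n) (m : Fin n → ℕ) (t : ℂ) (i : Fin n) : DiffOp n :=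
  if i = 0 then opOfDeriv ((xiTree T m i).map (Polynomial.evalRingHom t))
  else mX (T.parent i) * opOfDeriv ((xiTree T m i).map (Polynomial.evalRingHom t))

/-- `D = ∂_{x_1}^{m_1} + Σ_{(ι_i,ι_j)∈E} x_i ∂_{x_j}^{m_j}`. -/
noncomputable def Dtree (T : TreeDiagram n) (m : Fin n → ℕ) : DiffOp n :=
  pd (0 : Fin n) ^ (m 0) +
    ∑ j ∈ Finset.univ.filter (fun j : Fin n => j ≠ 0), mX (T.parent j) * pd j ^ (m j)

/-- The chain tree `T_{A_n}` with all weights `1`. -/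
def chainTree (n : ℕ) [NeZero n] : TreeDiagram n where
  parent := fun i => ⟨i.val - 1, lt_of_le_of_lt (Nat.sub_le _ _) i.isLt⟩
  parent_lt := by
    intro i hi
    have h0 : i.val ≠ 0 := by
      intro h; exact hi (Fin.ext (by simpa using h))
    simp only [Fin.lt_def]
    omega
  weight := fun _ => 1
  weight_pos := fun _ _ => one_pos

end

noncomputable section ChainAuxSec

namespace ChainAux

open MvPolynomial Finset

/-! ### Generic `expApply` lemmas -/

section Generic

variable {V : Type} [AddCommGroup V] [Module ℂ V] {A : Module.End ℂ V} {p q : V}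

lemma pow_apply_eventually_zero {N : ℕ} (h : (A ^ N) p = 0) :
    ∀ k, N ≤ k → (A ^ k) p = 0 := by
  intro k hk
  have hk' : A ^ k = A ^ (k - N) * A ^ N := by rw [← pow_add]; congr 1; omega
  rw [hk', Module.End.mul_apply, h, map_zero]

lemma sum_pow_ext {N₁ N₂ : ℕ} (h₁ : ∀ k, N₁ ≤ k → (A ^ k) p = 0)
    (h₂ : ∀ k, N₂ ≤ k → (A ^ k) p = 0) (c : ℕ → ℂ) :
    ∑ k ∈ Finset.range N₁, c k • (A ^ k) p = ∑ k ∈ Finset.range N₂, c k • (A ^ k) p := by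
  trans ∑ k ∈ Finset.range (max N₁ N₂), c k • (A ^ k) p
  · refine Finset.sum_subset (Finset.range_subset_range.2 (le_max_left _ _)) (fun x _ hx => ?_)
    rw [h₁ x (by simpa using hx), smul_zero]
  · refine (Finset.sum_subset (Finset.range_subset_range.2 (le_max_right _ _)) (fun x _ hx => ?_)).symm
    rw [h₂ x (by simpa using hx), smul_zero]

lemma expApply_eq_sum {N : ℕ} (h : ∀ k, N ≤ k → (A ^ k) p = 0) :
    expApply A p = ∑ k ∈ Finset.range N, ((k.factorial : ℂ))⁻¹ • (A ^ k) p := by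
  have hLN : LocNilpOn A p := ⟨N, h⟩
  rw [expApply, dif_pos hLN]
  exact sum_pow_ext hLN.choose_spec h _

lemma thetaApply_eq_sum {N : ℕ} (h : ∀ k, N ≤ k → (A ^ k) p = 0) :
    thetaApply A p
      = ∑ k ∈ Finset.range N, ((-1 : ℂ) ^ k * (((k + 1).factorial : ℂ))⁻¹) • (A ^ k) p := by
  have hLN : LocNilpOn A p := ⟨N, h⟩
  rw [thetaApply, dif_pos hLN]
  exact sum_pow_ext hLN.choose_spec h _

lemma expApply_add (hp : LocNilpOn A p) (hq : LocNilpOn A q) :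
    expApply A (p + q) = expApply A p + expApply A q := by
  obtain ⟨N₁, h₁⟩ := hp
  obtain ⟨N₂, h₂⟩ := hq
  have h₁' : ∀ k, max N₁ N₂ ≤ k → (A ^ k) p = 0 := fun k hk => h₁ k (le_trans (le_max_left _ _) hk)
  have h₂' : ∀ k, max N₁ N₂ ≤ k → (A ^ k) q = 0 := fun k hk => h₂ k (le_trans (le_max_right _ _) hk)
  have h₃ : ∀ k, max N₁ N₂ ≤ k → (A ^ k) (p + q) = 0 := fun k hk => by
    rw [map_add, h₁' k hk, h₂' k hk, add_zero]
  rw [expApply_eq_sum h₃, expApply_eq_sum h₁', expApply_eq_sum h₂', ← Finset.sum_add_distrib]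
  exact Finset.sum_congr rfl fun k _ => by rw [map_add, smul_add]

lemma expApply_smul (c : ℂ) (hp : LocNilpOn A p) :
    expApply A (c • p) = c • expApply A p := by
  obtain ⟨N, h⟩ := hp
  have h' : ∀ k, N ≤ k → (A ^ k) (c • p) = 0 := fun k hk => by rw [map_smul, h k hk, smul_zero]
  rw [expApply_eq_sum h', expApply_eq_sum h, Finset.smul_sum]
  refine Finset.sum_congr rfl fun k _ => ?_
  rw [map_smul]
  exact smul_comm ((k.factorial : ℂ))⁻¹ c ((A ^ k) p)

lemma expApply_of_apply_eq_zero (h : A p = 0) : expApply A p = p := by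
  have h1 : ∀ k, 1 ≤ k → (A ^ k) p = 0 :=
    pow_apply_eventually_zero (by rwa [pow_one])
  rw [expApply_eq_sum h1]
  simp

lemma locNilpOn_add (hp : LocNilpOn A p) (hq : LocNilpOn A q) : LocNilpOn A (p + q) := by
  obtain ⟨N₁, h₁⟩ := hp
  obtain ⟨N₂, h₂⟩ := hq
  exact ⟨max N₁ N₂, fun k hk => by
    rw [map_add, h₁ k (le_trans (le_max_left _ _) hk), h₂ k (le_trans (le_max_right _ _) hk),
      add_zero]⟩

lemma locNilpOn_smul (c : ℂ) (hp : LocNilpOn A p) : LocNilpOn A (c • p) := by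
  obtain ⟨N, h⟩ := hp
  exact ⟨N, fun k hk => by rw [map_smul, h k hk, smul_zero]⟩

lemma locNilpOn_shift (hp : LocNilpOn A (A p)) : LocNilpOn A p := by
  obtain ⟨N, h⟩ := hp
  refine ⟨N + 1, fun k hk => ?_⟩
  obtain ⟨j, rfl⟩ : ∃ j, k = j + 1 := ⟨k - 1, by omega⟩
  rw [pow_succ, Module.End.mul_apply]
  exact h j (by omega)

lemma locNilpOn_of_apply_eq_zero (h : A p = 0) : LocNilpOn A p :=
  ⟨1, pow_apply_eventually_zero (by rwa [pow_one])⟩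

end Generic

/-! ### Derivations on `MvPolynomial (Fin n) ℂ` -/

section Der

variable {n : ℕ}

def IsDer (D : DiffOp' n) : Prop :=
  ∀ p q : MvPolynomial (Fin n) ℂ, D (p * q) = D p * q + p * D q

@[simp] lemma pd'_apply (i : Fin n) (p : MvPolynomial (Fin n) ℂ) :
    pd' i p = MvPolynomial.pderiv i p := rfl

lemma isDer_pd' (i : Fin n) : IsDer (pd' i) := fun p q => by
  simp only [pd'_apply, MvPolynomial.pderiv_mul]

lemma isDer_mulLeft_pd' (f : MvPolynomial (Fin n) ℂ) (i : Fin n) :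
    IsDer (LinearMap.mulLeft ℂ f * pd' i) := fun p q => by
  simp only [Module.End.mul_apply, LinearMap.mulLeft_apply, pd'_apply, MvPolynomial.pderiv_mul]
  ring

lemma IsDer.add {D E : DiffOp' n} (hD : IsDer D) (hE : IsDer E) : IsDer (D + E) := fun p q => by
  simp only [LinearMap.add_apply, hD p q, hE p q]
  ring

lemma IsDer.smul {D : DiffOp' n} (c : ℂ) (hD : IsDer D) : IsDer (c • D) := fun p q => by
  simp only [LinearMap.smul_apply, hD p q, smul_add, smul_mul_assoc, mul_smul_comm]

lemma isDer_sum {s : Finset (Fin n)} {F : Fin n → DiffOp' n} (h : ∀ k ∈ s, IsDer (F k)) :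
    IsDer (∑ k ∈ s, F k) := fun p q => by
  simp only [LinearMap.sum_apply]
  rw [Finset.sum_congr rfl (fun k hk => h k hk p q), Finset.sum_add_distrib,
    Finset.sum_mul, Finset.mul_sum]

lemma mX'_pow (j : Fin n) (e : ℕ) :
    (mX' j : DiffOp' n) ^ e
      = LinearMap.mulLeft ℂ ((MvPolynomial.X j : MvPolynomial (Fin n) ℂ) ^ e) := by
  unfold mX'
  exact LinearMap.pow_mulLeft (R := ℂ) (A := MvPolynomial (Fin n) ℂ) (MvPolynomial.X j) e

lemma IsDer.one_eq_zero {D : DiffOp' n} (hD : IsDer D) : D 1 = 0 := by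
  have h := hD 1 1
  simp only [mul_one, one_mul] at h
  exact (left_eq_add.mp h)

lemma IsDer.C_eq_zero {D : DiffOp' n} (hD : IsDer D) (a : ℂ) : D (MvPolynomial.C a) = 0 := by
  have hC : (MvPolynomial.C a : MvPolynomial (Fin n) ℂ) = a • 1 := by
    rw [MvPolynomial.smul_eq_C_mul, mul_one]
  rw [hC, map_smul, hD.one_eq_zero, smul_zero]

lemma pow_succ_apply (D : DiffOp' n) (k : ℕ) (p : MvPolynomial (Fin n) ℂ) :
    (D ^ (k + 1)) p = D ((D ^ k) p) := by
  rw [pow_succ', Module.End.mul_apply]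

lemma pow_succ_apply' (D : DiffOp' n) (k : ℕ) (p : MvPolynomial (Fin n) ℂ) :
    (D ^ (k + 1)) p = (D ^ k) (D p) := by
  rw [pow_succ, Module.End.mul_apply]

lemma IsDer.pow_mul_apply {D : DiffOp' n} (hD : IsDer D) (p q : MvPolynomial (Fin n) ℂ) :
    ∀ k : ℕ, (D ^ k) (p * q)
      = ∑ i ∈ Finset.range (k + 1), k.choose i • ((D ^ (k - i)) p * (D ^ i) q) := by
  intro k
  induction k with
  | zero => simp
  | succ k IH =>
    calc (D ^ (k + 1)) (p * q)
        = D (∑ i ∈ range (k + 1), k.choose i • ((D ^ (k - i)) p * (D ^ i) q)) := by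
          rw [pow_succ_apply, IH]
      _ = (∑ i ∈ range (k + 1), k.choose i • ((D ^ (k - i + 1)) p * (D ^ i) q)) +
          ∑ i ∈ range (k + 1), k.choose i • ((D ^ (k - i)) p * (D ^ (i + 1)) q) := by
          rw [map_sum, ← Finset.sum_add_distrib]
          refine Finset.sum_congr rfl fun i _ => ?_
          rw [map_nsmul, hD _ _, smul_add, pow_succ_apply, pow_succ_apply]
      _ = ((∑ i ∈ range (k + 1), k.choose (i + 1) • ((D ^ (k - i)) p * (D ^ (i + 1)) q)) +
            1 • ((D ^ (k + 1)) p * (D ^ 0) q)) +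
          ∑ i ∈ range (k + 1), k.choose i • ((D ^ (k - i)) p * (D ^ (i + 1)) q) := by
          congr 1
          rw [Finset.sum_range_succ' (fun i => k.choose i • ((D ^ (k - i + 1)) p * (D ^ i) q)) k,
            Finset.sum_range_succ
              (fun i => k.choose (i + 1) • ((D ^ (k - i)) p * (D ^ (i + 1)) q)) k]
          simp only [Nat.choose_succ_self, zero_smul, add_zero, Nat.choose_zero_right,
            Nat.sub_zero]
          refine congrArg₂ _ (Finset.sum_congr rfl fun i hi => ?_) rfl
          rw [Finset.mem_range] at hi
          have he : k - (i + 1) + 1 = k - i := by omega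
          rw [he]
      _ = ((∑ i ∈ range (k + 1), k.choose (i + 1) • ((D ^ (k - i)) p * (D ^ (i + 1)) q)) +
          ∑ i ∈ range (k + 1), k.choose i • ((D ^ (k - i)) p * (D ^ (i + 1)) q)) +
            1 • ((D ^ (k + 1)) p * (D ^ 0) q) := by
          abel
      _ = (∑ i ∈ range (k + 1), (k + 1).choose (i + 1) • ((D ^ (k - i)) p * (D ^ (i + 1)) q)) +
            1 • ((D ^ (k + 1)) p * (D ^ 0) q) := by
          rw [← Finset.sum_add_distrib]
          refine congrArg₂ _ (Finset.sum_congr rfl fun i _ => ?_) rfl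
          rw [Nat.choose_succ_succ', add_smul, add_comm]
      _ = ∑ i ∈ range (k + 2), (k + 1).choose i • ((D ^ (k + 1 - i)) p * (D ^ i) q) := by
          rw [Finset.sum_range_succ'
            (fun i => (k + 1).choose i • ((D ^ (k + 1 - i)) p * (D ^ i) q)) (k + 1)]
          simp only [Nat.choose_zero_right, Nat.sub_zero, one_smul, pow_zero]
          refine congrArg₂ _ (Finset.sum_congr rfl fun i hi => ?_) rfl
          rw [Finset.mem_range] at hi
          have he : k + 1 - (i + 1) = k - i := by omega
          rw [he]

lemma locNilpOn_mul {D : DiffOp' n} (hD : IsDer D) {p q : MvPolynomial (Fin n) ℂ}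
    (hp : LocNilpOn D p) (hq : LocNilpOn D q) : LocNilpOn D (p * q) := by
  obtain ⟨N₁, h₁⟩ := hp
  obtain ⟨N₂, h₂⟩ := hq
  refine ⟨N₁ + N₂, fun k hk => ?_⟩
  rw [hD.pow_mul_apply]
  refine Finset.sum_eq_zero fun i hi => ?_
  rw [Finset.mem_range] at hi
  rcases le_or_gt N₂ i with h | h
  · rw [h₂ i h, mul_zero, smul_zero]
  · rw [h₁ (k - i) (by omega), zero_mul, smul_zero]

lemma locNilpOn_pow {D : DiffOp' n} (hD : IsDer D) {p : MvPolynomial (Fin n) ℂ}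
    (hp : LocNilpOn D p) (e : ℕ) : LocNilpOn D (p ^ e) := by
  induction e with
  | zero => exact locNilpOn_of_apply_eq_zero (by rw [pow_zero]; exact hD.one_eq_zero)
  | succ e IH => rw [pow_succ]; exact locNilpOn_mul hD IH hp

lemma locNilpOn_of_X {D : DiffOp' n} (hD : IsDer D)
    (hX : ∀ a : Fin n, LocNilpOn D (MvPolynomial.X a)) (p : MvPolynomial (Fin n) ℂ) :
    LocNilpOn D p := by
  induction p using MvPolynomial.induction_on with
  | C a => exact locNilpOn_of_apply_eq_zero (hD.C_eq_zero a)
  | add p q hp hq => exact locNilpOn_add hp hq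
  | mul_X p a hp => exact locNilpOn_mul hD hp (hX a)

/-- triangular reindexing -/
lemma triangle_sum {V : Type} [AddCommMonoid V] (N : ℕ) (F : ℕ → ℕ → V) :
    ∑ k ∈ Finset.range N, ∑ i ∈ Finset.range (k + 1), F i (k - i)
      = ∑ i ∈ Finset.range N, ∑ j ∈ Finset.range (N - i), F i j := by
  rw [Finset.sum_sigma', Finset.sum_sigma']
  refine Finset.sum_bij' (fun x _ => (⟨x.2, x.1 - x.2⟩ : Σ _ : ℕ, ℕ))
    (fun y _ => (⟨y.1 + y.2, y.1⟩ : Σ _ : ℕ, ℕ)) ?_ ?_ ?_ ?_ ?_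
  · intro x hx
    simp only [Finset.mem_sigma, Finset.mem_range] at hx ⊢
    omega
  · intro y hy
    simp only [Finset.mem_sigma, Finset.mem_range] at hy ⊢
    omega
  · intro x hx
    simp only [Finset.mem_sigma, Finset.mem_range] at hx
    refine Sigma.ext ?_ ?_ <;> simp <;> omega
  · intro y hy
    simp only [Finset.mem_sigma, Finset.mem_range] at hy
    refine Sigma.ext ?_ ?_ <;> simp
  · intro x hx
    rfl

lemma choose_factorial_inv (k i : ℕ) (h : i ≤ k) :
    ((k.factorial : ℂ))⁻¹ * (k.choose i : ℂ)
      = ((k - i).factorial : ℂ)⁻¹ * ((i.factorial : ℂ))⁻¹ := by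
  have h1 : ((k.choose i * i.factorial * (k - i).factorial : ℕ) : ℂ) = (k.factorial : ℂ) := by
    rw [Nat.choose_mul_factorial_mul_factorial h]
  push_cast at h1
  have hi : (i.factorial : ℂ) ≠ 0 := Nat.cast_ne_zero.mpr (Nat.factorial_ne_zero i)
  have hki : ((k - i).factorial : ℂ) ≠ 0 := Nat.cast_ne_zero.mpr (Nat.factorial_ne_zero _)
  have hk : (k.factorial : ℂ) ≠ 0 := Nat.cast_ne_zero.mpr (Nat.factorial_ne_zero k)
  field_simp
  linear_combination h1

lemma expApply_mul {D : DiffOp' n} (hD : IsDer D) {p q : MvPolynomial (Fin n) ℂ}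
    (hp : LocNilpOn D p) (hq : LocNilpOn D q) :
    expApply D (p * q) = expApply D p * expApply D q := by
  obtain ⟨N₁, h₁⟩ := hp
  obtain ⟨N₂, h₂⟩ := hq
  set N := N₁ + N₂ with hN
  have hpq : ∀ k, N ≤ k → (D ^ k) (p * q) = 0 := by
    intro k hk
    rw [hD.pow_mul_apply]
    refine Finset.sum_eq_zero fun i hi => ?_
    rw [Finset.mem_range] at hi
    rcases le_or_gt N₂ i with h | h
    · rw [h₂ i h, mul_zero, smul_zero]
    · rw [h₁ (k - i) (by omega), zero_mul, smul_zero]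
  rw [expApply_eq_sum hpq, expApply_eq_sum (fun k (hk : N ≤ k) => h₁ k (by omega)),
    expApply_eq_sum (fun k (hk : N ≤ k) => h₂ k (by omega)), Finset.sum_mul_sum]
  have hL : ∀ k ∈ Finset.range N, ((k.factorial : ℂ))⁻¹ • (D ^ k) (p * q)
      = ∑ i ∈ Finset.range (k + 1),
          ((((k - i).factorial : ℂ))⁻¹ * ((i.factorial : ℂ))⁻¹) •
            ((D ^ (k - i)) p * (D ^ i) q) := by
    intro k _
    rw [hD.pow_mul_apply, Finset.smul_sum]
    refine Finset.sum_congr rfl fun i hi => ?_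
    rw [Finset.mem_range] at hi
    rw [← Nat.cast_smul_eq_nsmul ℂ, smul_smul, choose_factorial_inv k i (by omega)]
  rw [Finset.sum_congr rfl hL,
    triangle_sum N (fun a b => (((b.factorial : ℂ))⁻¹ * ((a.factorial : ℂ))⁻¹) •
      ((D ^ b) p * (D ^ a) q))]
  have hstep : ∀ i ∈ Finset.range N, ∀ j ∈ Finset.range N,
      (((i.factorial : ℂ))⁻¹ • (D ^ i) p) * (((j.factorial : ℂ))⁻¹ • (D ^ j) q)
        = (((i.factorial : ℂ))⁻¹ * ((j.factorial : ℂ))⁻¹) • ((D ^ i) p * (D ^ j) q) :=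
    fun i _ j _ => smul_mul_smul_comm _ _ _ _
  rw [Finset.sum_congr rfl (fun i hi => Finset.sum_congr rfl (fun j hj => hstep i hi j hj)),
    Finset.sum_comm]
  refine Finset.sum_congr rfl fun a ha => ?_
  rw [Finset.mem_range] at ha
  refine Finset.sum_subset (Finset.range_subset_range.2 (by omega)) fun b hb hb' => ?_
  rw [Finset.mem_range] at hb
  rw [Finset.mem_range, not_lt] at hb'
  rcases le_or_gt N₂ a with h | h
  · rw [h₂ a h, mul_zero, smul_zero]
  · rw [h₁ b (by omega), zero_mul, smul_zero]

end Der

/-! ### The chain operators -/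

section Chain

variable {n : ℕ} (h0 : 0 < n) (m : ℕ → ℕ) (t : ℂ)

lemma DchainOp_apply (i : ℕ) (p : MvPolynomial (Fin n) ℂ) :
    DchainOp n h0 m t i p = t • (MvPolynomial.pderiv (⟨0, h0⟩ : Fin n) p +
      ∑ k ∈ Finset.univ.filter (fun k : Fin n => 0 < k.val ∧ k.val < i),
        MvPolynomial.X (⟨k.val - 1, lt_of_le_of_lt (Nat.sub_le _ _) k.isLt⟩ : Fin n) ^ (m k.val)
          * MvPolynomial.pderiv k p) := by
  unfold DchainOp
  simp only [LinearMap.smul_apply, LinearMap.add_apply, LinearMap.sum_apply,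
    Module.End.mul_apply, mX'_pow, LinearMap.mulLeft_apply, pd'_apply]

lemma isDer_DchainOp (i : ℕ) : IsDer (DchainOp n h0 m t i) := by
  unfold DchainOp
  refine IsDer.smul _ ((isDer_pd' _).add (isDer_sum fun k _ => ?_))
  rw [mX'_pow]
  exact isDer_mulLeft_pd' _ _

lemma pderiv_pderiv (i j : Fin n) (p : MvPolynomial (Fin n) ℂ) :
    MvPolynomial.pderiv i (MvPolynomial.pderiv j p)
      = MvPolynomial.pderiv j (MvPolynomial.pderiv i p) := by
  induction p using MvPolynomial.induction_on with
  | C a => simp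
  | add p q hp hq => simp [hp, hq]
  | mul_X p a hp =>
    simp only [MvPolynomial.pderiv_mul, map_add, MvPolynomial.pderiv_X]
    classical
    rcases eq_or_ne a i with rfl | hi <;> rcases eq_or_ne a j with h | hj <;>
      simp_all [MvPolynomial.pderiv_X, Pi.single_apply] <;> ring

lemma commute_pd'_pd' (i j : Fin n) : Commute (pd' i) (pd' j) := by
  refine LinearMap.ext fun p => ?_
  simp only [Module.End.mul_apply, pd'_apply]
  exact pderiv_pderiv i j p

lemma commute_pd'_mulLeft (i : Fin n) (f : MvPolynomial (Fin n) ℂ)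
    (hf : MvPolynomial.pderiv i f = 0) : Commute (pd' i) (LinearMap.mulLeft ℂ f) := by
  refine LinearMap.ext fun p => ?_
  simp [Module.End.mul_apply, MvPolynomial.pderiv_mul, hf]

lemma pderiv_X_pow_ne (i j : Fin n) (h : j ≠ i) (e : ℕ) :
    MvPolynomial.pderiv i ((MvPolynomial.X j : MvPolynomial (Fin n) ℂ) ^ e) = 0 := by
  rw [MvPolynomial.pderiv_pow, MvPolynomial.pderiv_X_of_ne h, mul_zero]

lemma commute_pd'_DchainOp (hn : 2 ≤ n) (i : ℕ) (hi : i ≤ n - 1) :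
    Commute (pd' (⟨n - 1, Nat.sub_lt h0 one_pos⟩ : Fin n)) (DchainOp n h0 m t i) := by
  unfold DchainOp
  refine Commute.smul_right ?_ t
  refine Commute.add_right (commute_pd'_pd' _ _) ?_
  refine Commute.sum_right _ _ _ fun k hk => ?_
  simp only [Finset.mem_filter, Finset.mem_univ, true_and] at hk
  refine Commute.mul_right ?_ (commute_pd'_pd' _ _)
  rw [mX'_pow]
  refine commute_pd'_mulLeft _ _ ?_
  refine pderiv_X_pow_ne _ _ (fun h => ?_) _
  have hv : k.val - 1 = n - 1 := congrArg Fin.val h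
  omega

lemma DchainOp_split (hn : 2 ≤ n) :
    DchainOp n h0 m t n = DchainOp n h0 m t (n - 1) +
      t • (LinearMap.mulLeft ℂ
            ((MvPolynomial.X (⟨n - 2, Nat.sub_lt h0 two_pos⟩ : Fin n) : MvPolynomial (Fin n) ℂ) ^ (m (n - 1)))
          * pd' (⟨n - 1, Nat.sub_lt h0 one_pos⟩ : Fin n)) := by
  unfold DchainOp
  rw [← smul_add]
  congr 1
  rw [add_assoc]
  congr 1
  have hset : Finset.univ.filter (fun k : Fin n => 0 < k.val ∧ k.val < n)
      = insert (⟨n - 1, by omega⟩ : Fin n)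
          (Finset.univ.filter (fun k : Fin n => 0 < k.val ∧ k.val < n - 1)) := by
    ext k
    simp only [Finset.mem_filter, Finset.mem_univ, true_and, Finset.mem_insert, Fin.ext_iff]
    have := k.isLt
    constructor
    · intro hh
      rcases Nat.lt_or_ge k.val (n - 1) with h' | h'
      · exact Or.inr ⟨hh.1, h'⟩
      · left
        show k.val = n - 1
        omega
    · intro hh
      rcases hh with h' | h'
      · have : k.val = n - 1 := h'
        omega
      · omega
  rw [hset, Finset.sum_insert (by simp), add_comm]
  congr 1
  rw [mX'_pow]
  have hX : ((⟨(n - 1 : ℕ) - 1, lt_of_le_of_lt (Nat.sub_le _ _)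
        (by omega : (n - 1 : ℕ) < n)⟩ : Fin n))
      = (⟨n - 2, by omega⟩ : Fin n) := by
    apply Fin.ext
    show n - 1 - 1 = n - 2
    omega
  rw [hX]

lemma DchainOp_apply_X (i : ℕ) (a : Fin n) :
    DchainOp n h0 m t i (MvPolynomial.X a) =
      if a.val = 0 then t • 1
      else if a.val < i then
        t • ((MvPolynomial.X (⟨a.val - 1, lt_of_le_of_lt (Nat.sub_le _ _) a.isLt⟩ : Fin n)
          : MvPolynomial (Fin n) ℂ) ^ (m a.val))
      else 0 := by
  rw [DchainOp_apply]
  have h1 : MvPolynomial.pderiv (⟨0, h0⟩ : Fin n) (MvPolynomial.X a : MvPolynomial (Fin n) ℂ)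
      = if a.val = 0 then 1 else 0 := by
    rcases eq_or_ne a (⟨0, h0⟩ : Fin n) with rfl | ha
    · simp [MvPolynomial.pderiv_X_self]
    · rw [MvPolynomial.pderiv_X_of_ne ha, if_neg]
      intro h
      exact ha (Fin.ext h)
  by_cases ha : 0 < a.val ∧ a.val < i
  · have hmem : a ∈ Finset.univ.filter (fun k : Fin n => 0 < k.val ∧ k.val < i) := by
      simp [ha]
    have hsum : (∑ k ∈ Finset.univ.filter (fun k : Fin n => 0 < k.val ∧ k.val < i),
        MvPolynomial.X (⟨k.val - 1, lt_of_le_of_lt (Nat.sub_le _ _) k.isLt⟩ : Fin n) ^ (m k.val)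
          * MvPolynomial.pderiv k (MvPolynomial.X a : MvPolynomial (Fin n) ℂ))
        = MvPolynomial.X (⟨a.val - 1, lt_of_le_of_lt (Nat.sub_le _ _) a.isLt⟩ : Fin n)
            ^ (m a.val) := by
      rw [Finset.sum_eq_single_of_mem a hmem (fun k _ hk => by
        rw [MvPolynomial.pderiv_X_of_ne (Ne.symm hk), mul_zero]),
        MvPolynomial.pderiv_X_self, mul_one]
    have hne : ¬ (a.val = 0) := by omega
    rw [h1, hsum, if_neg hne, if_neg hne, if_pos ha.2, zero_add]
  · have hz : (∑ k ∈ Finset.univ.filter (fun k : Fin n => 0 < k.val ∧ k.val < i),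
        MvPolynomial.X (⟨k.val - 1, lt_of_le_of_lt (Nat.sub_le _ _) k.isLt⟩ : Fin n) ^ (m k.val)
          * MvPolynomial.pderiv k (MvPolynomial.X a : MvPolynomial (Fin n) ℂ)) = 0 := by
      refine Finset.sum_eq_zero fun k hk => ?_
      simp only [Finset.mem_filter, Finset.mem_univ, true_and] at hk
      have hka : a ≠ k := by
        intro h
        subst h
        exact ha hk
      rw [MvPolynomial.pderiv_X_of_ne hka, mul_zero]
    rw [h1, hz]
    rcases eq_or_ne a.val 0 with h | h
    · rw [if_pos h, if_pos h, add_zero]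
    · have hni : ¬ a.val < i := fun hlt => ha ⟨by omega, hlt⟩
      rw [if_neg h, if_neg h, add_zero, smul_zero, if_neg hni]

lemma DchainOp_one (i : ℕ) : DchainOp n h0 m t i (1 : MvPolynomial (Fin n) ℂ) = 0 :=
  (isDer_DchainOp h0 m t i).one_eq_zero

lemma locNilpOn_DchainOp_X (i : ℕ) :
    ∀ (N : ℕ) (a : Fin n), a.val ≤ N → LocNilpOn (DchainOp n h0 m t i) (MvPolynomial.X a) := by
  intro N
  induction N with
  | zero =>
    intro a ha
    have ha0 : a.val = 0 := by omega
    refine locNilpOn_shift ?_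
    rw [DchainOp_apply_X, if_pos ha0]
    refine locNilpOn_smul _ (locNilpOn_of_apply_eq_zero ?_)
    exact DchainOp_one h0 m t i
  | succ N IH =>
    intro a ha
    rcases eq_or_ne a.val 0 with h | h
    · refine locNilpOn_shift ?_
      rw [DchainOp_apply_X, if_pos h]
      exact locNilpOn_smul _ (locNilpOn_of_apply_eq_zero (DchainOp_one h0 m t i))
    · refine locNilpOn_shift ?_
      rw [DchainOp_apply_X, if_neg h]
      by_cases hi : a.val < i
      · rw [if_pos hi]
        refine locNilpOn_smul _ (locNilpOn_pow (isDer_DchainOp h0 m t i) ?_ _)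
        exact IH _ (by show a.val - 1 ≤ N; omega)
      · rw [if_neg hi]
        exact locNilpOn_of_apply_eq_zero (map_zero _)

lemma locNilpOn_DchainOp (i : ℕ) (p : MvPolynomial (Fin n) ℂ) :
    LocNilpOn (DchainOp n h0 m t i) p :=
  locNilpOn_of_X (isDer_DchainOp h0 m t i)
    (fun a => locNilpOn_DchainOp_X h0 m t i a.val a le_rfl) p

end Chain

/-! ### Invariance under adding an operator vanishing on `x`-free polynomials -/

section Invariance

variable {n : ℕ} {A B : DiffOp' n} {i : Fin n}

lemma pd_pow_apply_eq_zero (hc : Commute (pd' i) A) {p : MvPolynomial (Fin n) ℂ}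
    (hp : MvPolynomial.pderiv i p = 0) (k : ℕ) :
    MvPolynomial.pderiv i ((A ^ k) p) = 0 := by
  have h1 : (pd' i) ((A ^ k) p) = (A ^ k) ((pd' i) p) := by
    rw [← Module.End.mul_apply, (hc.pow_right k).eq, Module.End.mul_apply]
  simpa [hp] using h1

lemma add_pow_apply_eq (hc : Commute (pd' i) A)
    (hB : ∀ q : MvPolynomial (Fin n) ℂ, MvPolynomial.pderiv i q = 0 → B q = 0) :
    ∀ (k : ℕ) (p : MvPolynomial (Fin n) ℂ), MvPolynomial.pderiv i p = 0 →
      ((A + B) ^ k) p = (A ^ k) p := by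
  intro k
  induction k with
  | zero => intro p _; simp
  | succ k IH =>
    intro p hp
    rw [pow_succ_apply' (A + B) k p, pow_succ_apply' A k p]
    have hAp : MvPolynomial.pderiv i (A p) = 0 := by
      have := pd_pow_apply_eq_zero hc hp 1
      simpa using this
    have : (A + B) p = A p := by
      rw [LinearMap.add_apply, hB p hp, add_zero]
    rw [this]
    exact IH (A p) hAp

lemma expApply_add_eq (hc : Commute (pd' i) A)
    (hB : ∀ q : MvPolynomial (Fin n) ℂ, MvPolynomial.pderiv i q = 0 → B q = 0)
    {p : MvPolynomial (Fin n) ℂ} (hp : MvPolynomial.pderiv i p = 0) (hAp : LocNilpOn A p) :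
    expApply (A + B) p = expApply A p := by
  obtain ⟨N, hN⟩ := hAp
  have hN' : ∀ k, N ≤ k → ((A + B) ^ k) p = 0 := fun k hk => by
    rw [add_pow_apply_eq hc hB k p hp, hN k hk]
  rw [expApply_eq_sum hN', expApply_eq_sum hN]
  exact Finset.sum_congr rfl fun k _ => by rw [add_pow_apply_eq hc hB k p hp]

end Invariance

/-! ### The scalar identity -/

lemma scalar_id (N : ℕ) :
    ∑ i ∈ Finset.range (N + 1),
        ((i.factorial : ℂ))⁻¹ * ((-1 : ℂ) ^ (N - i) * (((N - i) + 1).factorial : ℂ)⁻¹)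
      = (((N + 1).factorial : ℂ))⁻¹ := by
  have halt : ∑ i ∈ Finset.range (N + 2), ((-1 : ℂ)) ^ i * ((N + 1).choose i : ℂ) = 0 := by
    have h := Int.alternating_sum_range_choose_of_ne (n := N + 1) (by omega)
    have h2 := congrArg (fun z : ℤ => (z : ℂ)) h
    push_cast at h2
    convert h2 using 2
  have h1 : ∑ i ∈ Finset.range (N + 1), ((-1 : ℂ)) ^ i * ((N + 1).choose i : ℂ)
      = (-1 : ℂ) ^ N := by
    rw [Finset.sum_range_succ] at halt
    have : ((-1 : ℂ)) ^ (N + 1) * ((N + 1).choose (N + 1) : ℂ) = -(-1 : ℂ) ^ N := by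
      rw [Nat.choose_self]
      push_cast
      ring
    rw [this] at halt
    linear_combination halt
  have hterm : ∀ i ∈ Finset.range (N + 1),
      ((i.factorial : ℂ))⁻¹ * ((-1 : ℂ) ^ (N - i) * (((N - i) + 1).factorial : ℂ)⁻¹)
        = (((N + 1).factorial : ℂ))⁻¹ * ((-1 : ℂ) ^ N * ((-1 : ℂ) ^ i * ((N + 1).choose i : ℂ)))
      := by
    intro i hi
    rw [Finset.mem_range] at hi
    have hiN : i ≤ N := by omega
    have hsign : ((-1 : ℂ)) ^ (N - i) = (-1 : ℂ) ^ N * (-1 : ℂ) ^ i := by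
      have e1 : ((-1 : ℂ)) ^ (N - i) * (-1 : ℂ) ^ i = (-1 : ℂ) ^ N := by
        rw [← pow_add]
        congr 1
        omega
      have e2 : ((-1 : ℂ)) ^ i * (-1 : ℂ) ^ i = 1 := by
        rw [← pow_add, ← two_mul, pow_mul]
        norm_num
      calc ((-1 : ℂ)) ^ (N - i) = ((-1 : ℂ)) ^ (N - i) * (((-1 : ℂ)) ^ i * ((-1 : ℂ)) ^ i) := by
            rw [e2, mul_one]
        _ = (((-1 : ℂ)) ^ (N - i) * ((-1 : ℂ)) ^ i) * ((-1 : ℂ)) ^ i := by ring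
        _ = (-1 : ℂ) ^ N * (-1 : ℂ) ^ i := by rw [e1]
    have hc : ((N + 1).choose i * i.factorial * ((N + 1) - i).factorial : ℕ)
        = (N + 1).factorial := Nat.choose_mul_factorial_mul_factorial (by omega)
    have hc' : (((N + 1).choose i : ℂ)) * (i.factorial : ℂ) * (((N - i) + 1).factorial : ℂ)
        = ((N + 1).factorial : ℂ) := by
      have hsub : (N + 1) - i = (N - i) + 1 := by omega
      rw [hsub] at hc
      exact_mod_cast congrArg (fun z : ℕ => (z : ℂ)) hc
    have hfi : (i.factorial : ℂ) ≠ 0 := Nat.cast_ne_zero.mpr (Nat.factorial_ne_zero _)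
    have hfNi : (((N - i) + 1).factorial : ℂ) ≠ 0 := Nat.cast_ne_zero.mpr (Nat.factorial_ne_zero _)
    have hfN : (((N + 1).factorial : ℂ)) ≠ 0 := Nat.cast_ne_zero.mpr (Nat.factorial_ne_zero _)
    have key : ((i.factorial : ℂ))⁻¹ * ((((N - i) + 1).factorial : ℂ))⁻¹
        = (((N + 1).factorial : ℂ))⁻¹ * (((N + 1).choose i : ℂ)) := by
      field_simp
      linear_combination -hc'
    rw [hsign, show ((i.factorial : ℂ))⁻¹ * (((-1 : ℂ) ^ N * (-1 : ℂ) ^ i)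
        * ((((N - i) + 1).factorial : ℂ))⁻¹)
      = ((-1 : ℂ) ^ N * (-1 : ℂ) ^ i)
        * (((i.factorial : ℂ))⁻¹ * ((((N - i) + 1).factorial : ℂ))⁻¹) from by ring, key]
    ring
  rw [Finset.sum_congr rfl hterm, ← Finset.mul_sum]
  have : ∑ i ∈ Finset.range (N + 1), ((-1 : ℂ) ^ N * ((-1 : ℂ) ^ i * ((N + 1).choose i : ℂ)))
      = (-1 : ℂ) ^ N * ∑ i ∈ Finset.range (N + 1), ((-1 : ℂ) ^ i * ((N + 1).choose i : ℂ)) := by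
    rw [Finset.mul_sum]
  rw [this, h1]
  have e2 : ((-1 : ℂ)) ^ N * (-1 : ℂ) ^ N = 1 := by
    rw [← pow_add, ← two_mul, pow_mul]
    norm_num
  rw [e2, mul_one]

/-! ### The master lemma -/

section Master

variable {n : ℕ}

lemma main_factorization (hn : 2 ≤ n) (h0 : 0 < n) (m : ℕ → ℕ) (t : ℂ)
    (hlast : n - 1 < n) (hpre : n - 2 < n) (p : MvPolynomial (Fin n) ℂ) :
    expApply (DchainOp n h0 m t n) p =
      expApply (DchainOp n h0 m t (n - 1))
        (expApply (t • (LinearMap.mulLeft ℂ (thetaApply (DchainOp n h0 m t (n - 1))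
            ((MvPolynomial.X (⟨n - 2, hpre⟩ : Fin n)) ^ (m (n - 1)))) *
          pd' (⟨n - 1, hlast⟩ : Fin n))) p) := by
  have hAder : IsDer (DchainOp n h0 m t (n - 1)) := isDer_DchainOp h0 m t (n - 1)
  have hDnder : IsDer (DchainOp n h0 m t n) := isDer_DchainOp h0 m t n
  have hAloc : ∀ q, LocNilpOn (DchainOp n h0 m t (n - 1)) q := locNilpOn_DchainOp h0 m t (n - 1)
  have hDnloc : ∀ q, LocNilpOn (DchainOp n h0 m t n) q := locNilpOn_DchainOp h0 m t n
  set A := DchainOp n h0 m t (n - 1) with hA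
  set Dn := DchainOp n h0 m t n with hDn
  set g : MvPolynomial (Fin n) ℂ := (MvPolynomial.X (⟨n - 2, hpre⟩ : Fin n)) ^ (m (n - 1))
    with hg
  set θv := thetaApply A g with hθv
  set B : DiffOp' n := t • (LinearMap.mulLeft ℂ g * pd' (⟨n - 1, hlast⟩ : Fin n)) with hB
  set Cop : DiffOp' n := t • (LinearMap.mulLeft ℂ θv * pd' (⟨n - 1, hlast⟩ : Fin n)) with hCop
  have hsplit : Dn = A + B := by
    rw [hA, hDn, hB, hg]
    exact DchainOp_split h0 m t hn
  have hcomm : Commute (pd' (⟨n - 1, hlast⟩ : Fin n)) A :=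
    commute_pd'_DchainOp h0 m t hn (n - 1) le_rfl
  have hpdg : MvPolynomial.pderiv (⟨n - 1, hlast⟩ : Fin n) g = 0 := by
    rw [hg]
    refine pderiv_X_pow_ne _ _ (fun h => ?_) _
    have hv : n - 2 = n - 1 := congrArg Fin.val h
    omega
  have hBapply : ∀ q, B q
      = t • (g * MvPolynomial.pderiv (⟨n - 1, hlast⟩ : Fin n) q) := fun q => by
    rw [hB]
    simp [Module.End.mul_apply]
  have hBzero : ∀ q, MvPolynomial.pderiv (⟨n - 1, hlast⟩ : Fin n) q = 0 → B q = 0 :=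
    fun q hq => by rw [hBapply, hq, mul_zero, smul_zero]
  obtain ⟨K, hK⟩ := hAloc g
  have hθsum : θv
      = ∑ k ∈ Finset.range K, ((-1 : ℂ) ^ k * (((k + 1).factorial : ℂ))⁻¹) • (A ^ k) g :=
    thetaApply_eq_sum hK
  have hpdθ : MvPolynomial.pderiv (⟨n - 1, hlast⟩ : Fin n) θv = 0 := by
    have hh : pd' (⟨n - 1, hlast⟩ : Fin n) θv = 0 := by
      rw [hθsum, map_sum]
      refine Finset.sum_eq_zero fun k _ => ?_
      rw [map_smul, pd'_apply, pd_pow_apply_eq_zero hcomm hpdg k, smul_zero]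
    rw [← pd'_apply, hh]
  have hCapply : ∀ q, Cop q
      = t • (θv * MvPolynomial.pderiv (⟨n - 1, hlast⟩ : Fin n) q) := fun q => by
    rw [hCop]
    simp [Module.End.mul_apply]
  have hCder : IsDer Cop := by
    rw [hCop]
    exact IsDer.smul _ (isDer_mulLeft_pd' _ _)
  have hCloc : ∀ q, LocNilpOn Cop q := by
    refine fun q => locNilpOn_of_X hCder (fun a => ?_) q
    rcases eq_or_ne a (⟨n - 1, hlast⟩ : Fin n) with rfl | hne
    · refine locNilpOn_shift ?_
      rw [hCapply, MvPolynomial.pderiv_X_self, mul_one]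
      refine locNilpOn_smul _ (locNilpOn_of_apply_eq_zero ?_)
      rw [hCapply, hpdθ, mul_zero, smul_zero]
    · exact locNilpOn_of_apply_eq_zero
        (by rw [hCapply, MvPolynomial.pderiv_X_of_ne hne, mul_zero, smul_zero])
  have hAx : A (MvPolynomial.X (⟨n - 1, hlast⟩ : Fin n)) = 0 := by
    rw [hA, DchainOp_apply_X h0 m t (n - 1),
      if_neg (show ¬((⟨n - 1, hlast⟩ : Fin n).val = 0) from by show ¬(n - 1 = 0); omega),
      if_neg (show ¬((⟨n - 1, hlast⟩ : Fin n).val < n - 1) from by show ¬(n - 1 < n - 1); omega)]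
  have hgen : ∀ a : Fin n, expApply Dn (MvPolynomial.X a)
      = expApply A (expApply Cop (MvPolynomial.X a)) := by
    intro a
    rcases eq_or_ne a (⟨n - 1, hlast⟩ : Fin n) with rfl | hne
    · -- the essential generator computation
      have hDnx : Dn (MvPolynomial.X (⟨n - 1, hlast⟩ : Fin n)) = t • g := by
        rw [hsplit, LinearMap.add_apply, hAx, zero_add, hBapply,
          MvPolynomial.pderiv_X_self, mul_one]
      have hg1 : ∀ k, (Dn ^ (k + 1)) (MvPolynomial.X (⟨n - 1, hlast⟩ : Fin n))
          = t • ((A ^ k) g) := by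
        intro k
        rw [pow_succ_apply' Dn k, hDnx, map_smul, hsplit,
          add_pow_apply_eq hcomm hBzero k g hpdg]
      have hDnbound : ∀ j, K + 1 ≤ j →
          (Dn ^ j) (MvPolynomial.X (⟨n - 1, hlast⟩ : Fin n)) = 0 := by
        intro j hj
        obtain ⟨k, rfl⟩ : ∃ k, j = k + 1 := ⟨j - 1, by omega⟩
        rw [hg1 k, hK k (by omega), smul_zero]
      have hLHS : expApply Dn (MvPolynomial.X (⟨n - 1, hlast⟩ : Fin n))
          = MvPolynomial.X (⟨n - 1, hlast⟩ : Fin n)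
            + ∑ k ∈ Finset.range K, (((k + 1).factorial : ℂ))⁻¹ • (t • (A ^ k) g) := by
        rw [expApply_eq_sum hDnbound, Finset.sum_range_succ' _ K]
        simp only [pow_zero, Module.End.one_apply, Nat.factorial_zero, Nat.cast_one, inv_one,
          one_smul]
        rw [add_comm]
        congr 1
        exact Finset.sum_congr rfl fun k _ => by rw [hg1 k]
      have hCx : Cop (MvPolynomial.X (⟨n - 1, hlast⟩ : Fin n)) = t • θv := by
        rw [hCapply, MvPolynomial.pderiv_X_self, mul_one]
      have hCθ : Cop (t • θv) = 0 := by
        rw [map_smul, hCapply, hpdθ, mul_zero, smul_zero, smul_zero]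
      have hC2 : ∀ j, 2 ≤ j → (Cop ^ j) (MvPolynomial.X (⟨n - 1, hlast⟩ : Fin n)) = 0 := by
        refine pow_apply_eventually_zero ?_
        rw [pow_two, Module.End.mul_apply, hCx, hCθ]
      have hECx : expApply Cop (MvPolynomial.X (⟨n - 1, hlast⟩ : Fin n))
          = MvPolynomial.X (⟨n - 1, hlast⟩ : Fin n) + t • θv := by
        rw [expApply_eq_sum hC2]
        rw [Finset.sum_range_succ, Finset.sum_range_succ, Finset.range_zero,
          Finset.sum_empty, zero_add, pow_zero, pow_one, hCx]
        simp
      have hEA : expApply A (MvPolynomial.X (⟨n - 1, hlast⟩ : Fin n) + t • θv)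
          = MvPolynomial.X (⟨n - 1, hlast⟩ : Fin n) + t • expApply A θv := by
        rw [expApply_add (hAloc _) (hAloc _), expApply_of_apply_eq_zero hAx,
          expApply_smul t (hAloc _)]
      have hAθbound : ∀ i, K ≤ i → (A ^ i) θv = 0 := by
        intro i hi
        rw [hθsum, map_sum]
        refine Finset.sum_eq_zero fun k _ => ?_
        rw [map_smul, ← Module.End.mul_apply, ← pow_add, hK (i + k) (by omega), smul_zero]
      rw [hLHS, hECx, hEA, expApply_eq_sum hAθbound]
      congr 1
      have hinner : ∀ i ∈ Finset.range K, ((i.factorial : ℂ))⁻¹ • (A ^ i) θv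
          = ∑ k ∈ Finset.range K,
              (((i.factorial : ℂ))⁻¹ * ((-1 : ℂ) ^ k * (((k + 1).factorial : ℂ))⁻¹)) •
                (A ^ (i + k)) g := by
        intro i _
        rw [hθsum, map_sum, Finset.smul_sum]
        refine Finset.sum_congr rfl fun k _ => ?_
        rw [map_smul, smul_smul, ← Module.End.mul_apply, ← pow_add]
      have hprune : ∀ i ∈ Finset.range K,
          (∑ k ∈ Finset.range K,
              (((i.factorial : ℂ))⁻¹ * ((-1 : ℂ) ^ k * (((k + 1).factorial : ℂ))⁻¹)) •
                (A ^ (i + k)) g)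
            = ∑ k ∈ Finset.range (K - i),
                (((i.factorial : ℂ))⁻¹ * ((-1 : ℂ) ^ k * (((k + 1).factorial : ℂ))⁻¹)) •
                  (A ^ (i + k)) g := by
        intro i hi
        rw [Finset.mem_range] at hi
        refine (Finset.sum_subset (Finset.range_subset_range.2 (by omega)) fun k _ hk' => ?_).symm
        rw [Finset.mem_range, not_lt] at hk'
        rw [hK (i + k) (by omega), smul_zero]
      rw [Finset.sum_congr rfl (fun i hi => (hinner i hi).trans (hprune i hi)),
        ← triangle_sum K (fun i j =>
          (((i.factorial : ℂ))⁻¹ * ((-1 : ℂ) ^ j * (((j + 1).factorial : ℂ))⁻¹)) •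
            (A ^ (i + j)) g), Finset.smul_sum]
      refine Finset.sum_congr rfl fun N hN => ?_
      have hNi : ∀ i ∈ Finset.range (N + 1),
          (((i.factorial : ℂ))⁻¹ * ((-1 : ℂ) ^ (N - i) * (((N - i) + 1).factorial : ℂ)⁻¹)) •
              (A ^ (i + (N - i))) g
            = (((i.factorial : ℂ))⁻¹ * ((-1 : ℂ) ^ (N - i) * (((N - i) + 1).factorial : ℂ)⁻¹)) •
              (A ^ N) g := by
        intro i hi
        rw [Finset.mem_range] at hi
        rw [show i + (N - i) = N by omega]
      rw [Finset.sum_congr rfl hNi, ← Finset.sum_smul, scalar_id N]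
      rw [smul_comm]
    · have hpda : MvPolynomial.pderiv (⟨n - 1, hlast⟩ : Fin n)
          (MvPolynomial.X a : MvPolynomial (Fin n) ℂ) = 0 :=
        MvPolynomial.pderiv_X_of_ne hne
      have h1 : expApply Cop (MvPolynomial.X a) = MvPolynomial.X a :=
        expApply_of_apply_eq_zero (by rw [hCapply, hpda, mul_zero, smul_zero])
      rw [h1, hsplit]
      exact expApply_add_eq hcomm hBzero hpda (hAloc _)
  induction p using MvPolynomial.induction_on with
  | C a =>
    rw [expApply_of_apply_eq_zero (hDnder.C_eq_zero a),
      expApply_of_apply_eq_zero (hCder.C_eq_zero a),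
      expApply_of_apply_eq_zero (hAder.C_eq_zero a)]
  | add p q hp hq =>
    rw [expApply_add (hDnloc p) (hDnloc q), expApply_add (hCloc p) (hCloc q),
      expApply_add (hAloc _) (hAloc _), hp, hq]
  | mul_X p a hp =>
    rw [expApply_mul hDnder (hDnloc p) (hDnloc _),
      expApply_mul hCder (hCloc p) (hCloc _),
      expApply_mul hAder (hAloc _) (hAloc _), hp, hgen a]

end Master

end ChainAux

end ChainAuxSec

noncomputable section

/-- Lemma 4.1. -/
theorem chain_operator_factorization (n : ℕ) (hn : 2 ≤ n) (m : ℕ → ℕ)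
    (hm : ∀ r : ℕ, 1 ≤ r → r ≤ n - 1 → 0 < m r) (t : ℂ) :
    (∀ (i : ℕ) (p : MvPolynomial (Fin n) ℂ),
        LocNilpOn (DchainOp n (by omega) m t i) p) ∧
    ∀ p : MvPolynomial (Fin n) ℂ,
      expApply (DchainOp n (by omega) m t n) p =
        expApply (DchainOp n (by omega) m t (n - 1))
          (expApply
            (t • (LinearMap.mulLeft ℂ
                (thetaApply (DchainOp n (by omega) m t (n - 1))
                  ((MvPolynomial.X (⟨n - 2, by omega⟩ : Fin n)) ^ (m (n - 1)))) *
              pd' (⟨n - 1, by omega⟩ : Fin n))) p) :=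
  ⟨fun i p => ChainAux.locNilpOn_DchainOp _ m t i p,
    fun p => ChainAux.main_factorization hn _ m t _ _ p⟩

end
end

section
/- Let n≥1, let m_1,…,m_{n−1} be positive integers, and let f:ℝ^n→ℝ be a continuously differentiable function. Define functions η_i of (t,x_1,…,x_{n−1}) recursively by η_1(t)=t and η_{i+1}(t)=∫_0^t (x_i + η_i(y))^{m_i} dy for 1≤i≤n−1 (the integrand being evaluated at the same x-variables). Then u(t,x_1,…,x_n) = f(x_1+η_1(t), x_2+η_2(t), …, x_n+η_n(t)) satisfies the first-order evolution equation ∂_t u = ∂_{x_1}u + Σ_{i=1}^{n−1} x_i^{m_i} ∂_{x_{i+1}}u together with the initial condition u(0,x_1,…,x_n)=f(x_1,…,x_n). -/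
noncomputable section

attribute [local instance 100] LieRing.ofAssociativeRing

variable {n : ℕ} [NeZero n]

end

noncomputable section


noncomputable section ChainPf
open Polynomial

abbrev MV (n : ℕ) := MvPolynomial (Fin n) ℝ

/-- Formal antiderivative (coefficient-wise, over an ℝ-algebra). -/
def intP {n : ℕ} (p : Polynomial (MV n)) : Polynomial (MV n) :=
  p.sum fun e a => C ((e + 1 : ℝ)⁻¹ • a) * X ^ (e + 1)

/-- Coefficient-wise partial derivative in the `k`-th `x` variable. -/
def Dk {n : ℕ} (k : Fin n) (p : Polynomial (MV n)) : Polynomial (MV n) :=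
  p.sum fun e a => C (MvPolynomial.pderiv k a) * X ^ e

theorem intP_monomial {n : ℕ} (e : ℕ) (a : MV n) :
    intP (monomial e a) = C ((e + 1 : ℝ)⁻¹ • a) * X ^ (e + 1) := by
  rw [intP, sum_monomial_index]
  simp

theorem intP_add {n : ℕ} (p q : Polynomial (MV n)) : intP (p + q) = intP p + intP q := by
  rw [intP, sum_add_index]
  · rfl
  · simp
  · intro e a b; simp [smul_add, add_mul]

theorem Dk_monomial {n : ℕ} (k : Fin n) (e : ℕ) (a : MV n) :
    Dk k (monomial e a) = monomial e (MvPolynomial.pderiv k a) := by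
  rw [Dk, sum_monomial_index] <;> simp [C_mul_X_pow_eq_monomial]

theorem Dk_add {n : ℕ} (k : Fin n) (p q : Polynomial (MV n)) :
    Dk k (p + q) = Dk k p + Dk k q := by
  rw [Dk, sum_add_index]
  · rfl
  · simp
  · intro e a b; simp [add_mul]

theorem Dk_coeff {n : ℕ} (k : Fin n) (p : Polynomial (MV n)) (e : ℕ) :
    (Dk k p).coeff e = MvPolynomial.pderiv k (p.coeff e) := by
  induction p using Polynomial.induction_on' with
  | add p q hp hq => simp [Dk_add, hp, hq]
  | monomial d a => rw [Dk_monomial]; simp [coeff_monomial]; split <;> simp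

theorem Dk_mul {n : ℕ} (k : Fin n) (p q : Polynomial (MV n)) :
    Dk k (p * q) = Dk k p * q + p * Dk k q := by
  apply Polynomial.ext; intro e
  rw [Dk_coeff, coeff_add, coeff_mul, coeff_mul, coeff_mul, map_sum, ← Finset.sum_add_distrib]
  refine Finset.sum_congr rfl fun z _ => ?_
  rw [MvPolynomial.pderiv_mul, Dk_coeff, Dk_coeff]

theorem Dk_C {n : ℕ} (k : Fin n) (c : MV n) : Dk k (C c) = C (MvPolynomial.pderiv k c) := by
  rw [← monomial_zero_left, Dk_monomial, monomial_zero_left]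

theorem Dk_one {n : ℕ} (k : Fin n) : Dk k (1 : Polynomial (MV n)) = 0 := by
  rw [← C_1, Dk_C]; simp

theorem Dk_X {n : ℕ} (k : Fin n) : Dk k (X : Polynomial (MV n)) = 0 := by
  rw [← monomial_one_one_eq_X, Dk_monomial]; simp

theorem intP_zero {n : ℕ} : intP (0 : Polynomial (MV n)) = 0 := by
  simp [intP]

theorem intP_C_mul {n : ℕ} (c : MV n) (p : Polynomial (MV n)) :
    intP (C c * p) = C c * intP p := by
  induction p using Polynomial.induction_on' with
  | add p q hp hq => rw [mul_add, intP_add, hp, hq, intP_add, mul_add]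
  | monomial d a =>
      rw [C_mul_monomial, intP_monomial, intP_monomial, ← mul_assoc, ← C_mul, mul_smul_comm]

theorem intP_sum {n : ℕ} {ι : Type*} (s : Finset ι) (f : ι → Polynomial (MV n)) :
    intP (∑ i ∈ s, f i) = ∑ i ∈ s, intP (f i) := by
  classical
  induction s using Finset.induction_on with
  | empty => simp [intP_zero]
  | insert a s h ih => rw [Finset.sum_insert h, intP_add, ih, Finset.sum_insert h]

theorem Dk_intP {n : ℕ} (k : Fin n) (p : Polynomial (MV n)) :
    Dk k (intP p) = intP (Dk k p) := by
  induction p using Polynomial.induction_on' with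
  | add p q hp hq => rw [intP_add, Dk_add, hp, hq, Dk_add, intP_add]
  | monomial d a =>
      rw [intP_monomial, C_mul_X_pow_eq_monomial, Dk_monomial, Dk_monomial, intP_monomial,
        Derivation.map_smul, C_mul_X_pow_eq_monomial]

theorem scal {n : ℕ} (e : ℕ) (a : MV n) :
    ((e : ℝ) + 1)⁻¹ • (a * ((e + 1 : ℕ) : MV n)) = a := by
  rw [mul_comm, ← nsmul_eq_mul, ← Nat.cast_smul_eq_nsmul ℝ, smul_smul]
  push_cast
  rw [inv_mul_cancel₀ (by positivity), one_smul]

theorem derivative_intP {n : ℕ} (p : Polynomial (MV n)) : derivative (intP p) = p := by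
  induction p using Polynomial.induction_on' with
  | add p q hp hq => rw [intP_add, derivative_add, hp, hq]
  | monomial d a =>
      rw [intP_monomial, derivative_C_mul, derivative_X_pow, Nat.add_sub_cancel,
        ← mul_assoc, ← C_mul, smul_mul_assoc]
      rw [C_mul_X_pow_eq_monomial]
      congr 1
      exact_mod_cast scal d a

theorem intP_coeff_zero {n : ℕ} (p : Polynomial (MV n)) : (intP p).coeff 0 = 0 := by
  induction p using Polynomial.induction_on' with
  | add p q hp hq => rw [intP_add, coeff_add, hp, hq, add_zero]
  | monomial d a => rw [intP_monomial]; simp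

theorem intP_derivative {n : ℕ} (p : Polynomial (MV n)) :
    intP (derivative p) = p - C (p.coeff 0) := by
  induction p using Polynomial.induction_on' with
  | add p q hp hq => rw [derivative_add, intP_add, hp, hq, coeff_add, C_add]; ring
  | monomial d a =>
      rw [derivative_monomial, intP_monomial, coeff_monomial]
      cases d with
      | zero => simp [monomial_zero_left]
      | succ e =>
          rw [Nat.add_sub_cancel, if_neg (Nat.succ_ne_zero e), map_zero, sub_zero,
            C_mul_X_pow_eq_monomial]
          congr 1
          exact_mod_cast scal e a

/-- The variable `x_j`, or `0` out of range. -/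
def Vv (n : ℕ) (j : ℕ) : MV n := if h : j < n then MvPolynomial.X ⟨j, h⟩ else 0

/-- The polynomial representation of `η_j`. -/
def Pp (n : ℕ) (m : ℕ → ℕ) : ℕ → Polynomial (MV n)
  | 0 => X
  | (j+1) => intP ((C (Vv n j) + Pp n m j) ^ (m (j + 1)))

/-- The polynomial representation of `x_j + η_j`. -/
def Qq (n : ℕ) (m : ℕ → ℕ) (j : ℕ) : Polynomial (MV n) := C (Vv n j) + Pp n m j

/-- The vector field `∂_{x_0} + Σ x_j^{m_{j+1}} ∂_{x_{j+1}}` acting coefficient-wise. -/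
def DX (n : ℕ) (hn : 0 < n) (m : ℕ → ℕ) (p : Polynomial (MV n)) : Polynomial (MV n) :=
  Dk ⟨0, hn⟩ p + ∑ j : Fin n,
    if h : j.val + 1 < n then
      C (MvPolynomial.X j ^ m (j.val + 1)) * Dk ⟨j.val + 1, h⟩ p
    else 0

theorem DX_add (n : ℕ) (hn : 0 < n) (m : ℕ → ℕ) (p q : Polynomial (MV n)) :
    DX n hn m (p + q) = DX n hn m p + DX n hn m q := by
  rw [DX, DX, DX, Dk_add]
  have : ∀ j : Fin n,
      (if h : j.val + 1 < n then
        C (MvPolynomial.X j ^ m (j.val + 1)) * Dk ⟨j.val + 1, h⟩ (p + q) else 0) =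
      (if h : j.val + 1 < n then
        C (MvPolynomial.X j ^ m (j.val + 1)) * Dk ⟨j.val + 1, h⟩ p else 0) +
      (if h : j.val + 1 < n then
        C (MvPolynomial.X j ^ m (j.val + 1)) * Dk ⟨j.val + 1, h⟩ q else 0) := by
    intro j
    split
    · rw [Dk_add, mul_add]
    · rw [add_zero]
  rw [Finset.sum_congr rfl fun j _ => this j, Finset.sum_add_distrib]
  abel

theorem DX_mul (n : ℕ) (hn : 0 < n) (m : ℕ → ℕ) (p q : Polynomial (MV n)) :
    DX n hn m (p * q) = DX n hn m p * q + p * DX n hn m q := by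
  rw [DX, DX, DX, Dk_mul, add_mul, mul_add]
  have : ∀ j : Fin n,
      (if h : j.val + 1 < n then
        C (MvPolynomial.X j ^ m (j.val + 1)) * Dk ⟨j.val + 1, h⟩ (p * q) else 0) =
      (if h : j.val + 1 < n then
        C (MvPolynomial.X j ^ m (j.val + 1)) * Dk ⟨j.val + 1, h⟩ p else 0) * q +
      p * (if h : j.val + 1 < n then
        C (MvPolynomial.X j ^ m (j.val + 1)) * Dk ⟨j.val + 1, h⟩ q else 0) := by
    intro j
    split
    · rw [Dk_mul]; ring
    · rw [zero_mul, mul_zero, add_zero]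
  rw [Finset.sum_congr rfl fun j _ => this j, Finset.sum_add_distrib,
    ← Finset.sum_mul, ← Finset.mul_sum]
  abel

theorem DX_intP (n : ℕ) (hn : 0 < n) (m : ℕ → ℕ) (p : Polynomial (MV n)) :
    DX n hn m (intP p) = intP (DX n hn m p) := by
  rw [DX, DX, intP_add, Dk_intP, intP_sum]
  congr 1
  refine Finset.sum_congr rfl fun j _ => ?_
  split
  · rw [Dk_intP, intP_C_mul]
  · rw [intP_zero]

theorem DX_pow (n : ℕ) (hn : 0 < n) (m : ℕ → ℕ) (p : Polynomial (MV n))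
    (hp : derivative p = DX n hn m p) (M : ℕ) :
    DX n hn m (p ^ M) = derivative (p ^ M) := by
  induction M with
  | zero =>
      rw [pow_zero, derivative_one, DX]
      rw [Dk_one]
      simp [Dk_one]
  | succ M ih =>
      rw [pow_succ, DX_mul, derivative_mul, ih, hp]

theorem Dk_C_X_same {n : ℕ} (k : Fin n) : Dk k (C (MvPolynomial.X k)) = 1 := by
  rw [Dk_C, MvPolynomial.pderiv_X_self, C_1]

theorem Dk_C_X_ne {n : ℕ} (k i : Fin n) (h : i ≠ k) : Dk k (C (MvPolynomial.X i)) = 0 := by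
  rw [Dk_C, MvPolynomial.pderiv_X_of_ne h, C_0]

theorem Pp_coeff_zero (n : ℕ) (m : ℕ → ℕ) (j : ℕ) : (Pp n m j).coeff 0 = 0 := by
  cases j with
  | zero => exact coeff_X_zero
  | succ j => exact intP_coeff_zero _

theorem Qq_coeff_zero (n : ℕ) (m : ℕ → ℕ) (j : ℕ) : (Qq n m j).coeff 0 = Vv n j := by
  rw [Qq, coeff_add, Pp_coeff_zero, add_zero, coeff_C, if_pos rfl]

theorem DX_C_X (n : ℕ) (hn : 0 < n) (m : ℕ → ℕ) (j : ℕ) (hj : j + 1 < n) :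
    DX n hn m (C (MvPolynomial.X ⟨j + 1, hj⟩)) =
      C (MvPolynomial.X ⟨j, Nat.lt_of_succ_lt hj⟩ ^ m (j + 1)) := by
  rw [DX, Dk_C_X_ne _ _ (Fin.ne_of_val_ne (Nat.succ_ne_zero j)), zero_add]
  rw [Finset.sum_eq_single (⟨j, Nat.lt_of_succ_lt hj⟩ : Fin n)]
  · rw [dif_pos hj, Dk_C_X_same, mul_one]
  · intro b _ hb
    split
    · rename_i h
      rw [Dk_C_X_ne, mul_zero]
      have hbv : b.val ≠ j := fun hc => hb (Fin.ext hc)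
      refine Fin.ne_of_val_ne ?_
      simp only [Fin.val_mk]
      omega
    · rfl
  · intro h; exact absurd (Finset.mem_univ _) h

theorem main_ind (n : ℕ) (hn : 0 < n) (m : ℕ → ℕ) :
    ∀ j, j < n → derivative (Qq n m j) = DX n hn m (Qq n m j) := by
  intro j
  induction j with
  | zero =>
      intro _
      rw [Qq, Pp, derivative_add, derivative_C, derivative_X, zero_add, DX_add]
      have h1 : DX n hn m (C (Vv n 0)) = 1 := by
        rw [Vv, dif_pos hn, DX, Dk_C_X_same]
        rw [Finset.sum_eq_zero, add_zero]
        intro b _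
        split
        · rw [Dk_C_X_ne _ _ (Fin.ne_of_val_ne (Nat.succ_ne_zero _).symm), mul_zero]
        · rfl
      have h2 : DX n hn m X = 0 := by
        rw [DX, Dk_X]
        rw [Finset.sum_eq_zero, add_zero]
        intro b _
        split
        · rw [Dk_X, mul_zero]
        · rfl
      rw [h1, h2, add_zero]
  | succ j ih =>
      intro hj1
      have hj : j < n := Nat.lt_of_succ_lt hj1
      have hQ : derivative (Pp n m (j + 1)) = Qq n m j ^ m (j + 1) := by
        rw [Pp, ← Qq, derivative_intP]
      have hcz : (Qq n m j ^ m (j + 1)).coeff 0 =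
          MvPolynomial.X ⟨j, hj⟩ ^ m (j + 1) := by
        rw [coeff_zero_eq_eval_zero, eval_pow, ← coeff_zero_eq_eval_zero, Qq_coeff_zero,
          Vv, dif_pos hj]
      rw [Qq, derivative_add, derivative_C, zero_add, hQ, DX_add]
      have hV : Vv n (j + 1) = MvPolynomial.X ⟨j + 1, hj1⟩ := by rw [Vv, dif_pos hj1]
      rw [hV, DX_C_X n hn m j hj1]
      rw [Pp, ← Qq, DX_intP, DX_pow n hn m _ (ih hj), intP_derivative, hcz]
      ring

/-- Evaluation of a `Polynomial (MV n)` at `t` and `x`. -/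
def pevalH (n : ℕ) (t : ℝ) (x : Fin n → ℝ) : Polynomial (MV n) →+* ℝ :=
  (Polynomial.evalRingHom t).comp (Polynomial.mapRingHom (MvPolynomial.eval x))

theorem pevalH_apply (n : ℕ) (t : ℝ) (x : Fin n → ℝ) (p : Polynomial (MV n)) :
    pevalH n t x p = Polynomial.eval t (p.map (MvPolynomial.eval x)) := rfl

/-- Formal antiderivative for real polynomials. -/
def intR (q : Polynomial ℝ) : Polynomial ℝ := q.sum fun e a => C ((e + 1 : ℝ)⁻¹ * a) * X ^ (e + 1)

theorem intR_monomial (e : ℕ) (a : ℝ) :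
    intR (monomial e a) = C ((e + 1 : ℝ)⁻¹ * a) * X ^ (e + 1) := by
  rw [intR, sum_monomial_index]
  simp

theorem intR_add (p q : Polynomial ℝ) : intR (p + q) = intR p + intR q := by
  rw [intR, sum_add_index]
  · rfl
  · simp
  · intro e a b; simp [mul_add, add_mul]

theorem intP_map (n : ℕ) (x : Fin n → ℝ) (p : Polynomial (MV n)) :
    (intP p).map (MvPolynomial.eval x) = intR (p.map (MvPolynomial.eval x)) := by
  induction p using Polynomial.induction_on' with
  | add p q hp hq => rw [intP_add, Polynomial.map_add, hp, hq, Polynomial.map_add, intR_add]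
  | monomial e a =>
      rw [intP_monomial, Polynomial.map_mul, Polynomial.map_pow, Polynomial.map_C,
        Polynomial.map_X, Polynomial.map_monomial, intR_monomial]
      congr 2
      rw [MvPolynomial.smul_eq_C_mul, map_mul, MvPolynomial.eval_C]

theorem intR_eval (q : Polynomial ℝ) (t : ℝ) :
    ∫ y in (0:ℝ)..t, Polynomial.eval y q = Polynomial.eval t (intR q) := by
  induction q using Polynomial.induction_on' with
  | add p q hp hq =>
      simp only [eval_add]
      rw [intervalIntegral.integral_add ((p.continuous).intervalIntegrable _ _)
        ((q.continuous).intervalIntegrable _ _), hp, hq, intR_add, eval_add]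
  | monomial e a =>
      simp only [eval_monomial]
      rw [intervalIntegral.integral_const_mul, integral_pow, intR_monomial]
      rw [zero_pow (Nat.succ_ne_zero e), sub_zero]
      simp only [eval_mul, eval_C, eval_pow, eval_X]
      field_simp

theorem etaChain_zero (m : ℕ → ℕ) (x : ℕ → ℝ) (j : ℕ) : etaChain m x j 0 = 0 := by
  cases j with
  | zero => rfl
  | succ j => simp [etaChain]

theorem eta_eq (n : ℕ) (m : ℕ → ℕ) (x : Fin n → ℝ) (j : ℕ) (t : ℝ) :
    etaChain m (fun k => if h : k < n then x ⟨k, h⟩ else 0) j t = pevalH n t x (Pp n m j) := by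
  induction j generalizing t with
  | zero => simp [etaChain, Pp, pevalH_apply]
  | succ j ih =>
      have hQ : ∀ y : ℝ,
          (if h : j < n then x ⟨j, h⟩ else 0) +
              etaChain m (fun k => if h : k < n then x ⟨k, h⟩ else 0) j y =
            Polynomial.eval y ((Qq n m j).map (MvPolynomial.eval x)) := by
        intro y
        rw [ih y, Qq, Polynomial.map_add, eval_add, Polynomial.map_C, eval_C, pevalH_apply]
        congr 1
        rw [Vv]
        split
        · rw [MvPolynomial.eval_X]
        · rw [map_zero]
      show (∫ y in (0:ℝ)..t, ((if h : j < n then x ⟨j, h⟩ else 0) +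
          etaChain m (fun k => if h : k < n then x ⟨k, h⟩ else 0) j y) ^ (m (j+1))) = _
      simp only [hQ]
      have : ∀ y : ℝ, Polynomial.eval y ((Qq n m j).map (MvPolynomial.eval x)) ^ (m (j+1)) =
          Polynomial.eval y ((Qq n m j ^ (m (j+1))).map (MvPolynomial.eval x)) := by
        intro y; rw [Polynomial.map_pow, eval_pow]
      simp only [this]
      rw [intR_eval, pevalH_apply, Pp, intP_map, Qq]

theorem pevalH_hasDerivAt_t (n : ℕ) (t : ℝ) (x : Fin n → ℝ) (p : Polynomial (MV n)) :
    HasDerivAt (fun τ => pevalH n τ x p) (pevalH n t x (derivative p)) t := by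
  have := Polynomial.hasDerivAt (p.map (MvPolynomial.eval x)) t
  simpa [pevalH_apply, derivative_map] using this

/-- Substitution ring hom freezing all variables except `x_k`. -/
def psiH (n : ℕ) (k : Fin n) (x : Fin n → ℝ) : MvPolynomial (Fin n) ℝ →+* Polynomial ℝ :=
  MvPolynomial.eval₂Hom Polynomial.C fun j => if j = k then X else C (x j)

theorem psi_eval (n : ℕ) (k : Fin n) (x : Fin n → ℝ) (s : ℝ) (a : MV n) :
    Polynomial.eval s (psiH n k x a) = MvPolynomial.eval (Function.update x k s) a := by
  induction a using MvPolynomial.induction_on with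
  | C a => simp [psiH]
  | add p q hp hq => simp [map_add, hp, hq]
  | mul_X p i hp =>
      rw [map_mul, eval_mul, hp, map_mul, MvPolynomial.eval_X]
      congr 1
      rw [psiH, MvPolynomial.eval₂Hom_X', Function.update_apply]
      split <;> simp

theorem psi_derivative (n : ℕ) (k : Fin n) (x : Fin n → ℝ) (a : MV n) :
    derivative (psiH n k x a) = psiH n k x (MvPolynomial.pderiv k a) := by
  induction a using MvPolynomial.induction_on with
  | C a => simp [psiH]
  | add p q hp hq => rw [map_add, derivative_add, hp, hq, map_add, map_add]
  | mul_X p i hp =>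
      rw [map_mul, derivative_mul, hp, MvPolynomial.pderiv_mul, map_add, map_mul, map_mul]
      by_cases hik : i = k
      · subst hik
        rw [MvPolynomial.pderiv_X_self, map_one, mul_one]
        have hX : psiH n i x (MvPolynomial.X i) = X := by
          rw [psiH, MvPolynomial.eval₂Hom_X', if_pos rfl]
        rw [hX, derivative_X, mul_one]
      · rw [MvPolynomial.pderiv_X_of_ne hik, map_zero, mul_zero, add_zero]
        have hX : psiH n k x (MvPolynomial.X i) = C (x i) := by
          rw [psiH, MvPolynomial.eval₂Hom_X', if_neg hik]
        rw [hX, derivative_C, mul_zero, add_zero]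

theorem chi_eval (n : ℕ) (k : Fin n) (x : Fin n → ℝ) (t s : ℝ) (p : Polynomial (MV n)) :
    pevalH n t (Function.update x k s) p =
      Polynomial.eval s (Polynomial.eval₂ (psiH n k x) (C t) p) := by
  induction p using Polynomial.induction_on' with
  | add p q hp hq => rw [map_add, eval₂_add, eval_add, hp, hq]
  | monomial e a =>
      rw [pevalH_apply, Polynomial.map_monomial, eval_monomial, eval₂_monomial, eval_mul,
        eval_pow, eval_C, psi_eval]

theorem chi_derivative (n : ℕ) (k : Fin n) (x : Fin n → ℝ) (t : ℝ) (p : Polynomial (MV n)) :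
    derivative (Polynomial.eval₂ (psiH n k x) (C t) p) =
      Polynomial.eval₂ (psiH n k x) (C t) (Dk k p) := by
  induction p using Polynomial.induction_on' with
  | add p q hp hq => rw [eval₂_add, derivative_add, hp, hq, Dk_add, eval₂_add]
  | monomial e a =>
      rw [eval₂_monomial, ← C_pow, derivative_mul, derivative_C, mul_zero, add_zero,
        psi_derivative, Dk_monomial, eval₂_monomial, C_pow]

theorem pevalH_hasDerivAt_x (n : ℕ) (t : ℝ) (x : Fin n → ℝ) (k : Fin n)
    (p : Polynomial (MV n)) :
    HasDerivAt (fun s => pevalH n t (Function.update x k s) p)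
      (pevalH n t x (Dk k p)) (x k) := by
  have h2 := Polynomial.hasDerivAt (Polynomial.eval₂ (psiH n k x) (C t) p) (x k)
  rw [chi_derivative] at h2
  simp only [← chi_eval] at h2
  rwa [Function.update_eq_self] at h2

theorem pevalH_C (n : ℕ) (t : ℝ) (x : Fin n → ℝ) (c : MV n) :
    pevalH n t x (C c) = MvPolynomial.eval x c := by
  rw [pevalH_apply, Polynomial.map_C, eval_C]

theorem pevalH_Dk_CX (n : ℕ) (t : ℝ) (x : Fin n → ℝ) (k i : Fin n) :
    pevalH n t x (Dk k (C (MvPolynomial.X i))) = if i = k then 1 else 0 := by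
  by_cases h : i = k
  · subst h; rw [Dk_C_X_same, if_pos rfl, map_one]
  · rw [Dk_C_X_ne _ _ h, map_zero, if_neg h]

theorem key (n : ℕ) (hn : 0 < n) (m : ℕ → ℕ) (t : ℝ) (x : Fin n → ℝ) (i : Fin n) :
    pevalH n t x (derivative (Pp n m i.val)) =
      ((if i = ⟨0, hn⟩ then 1 else 0) + pevalH n t x (Dk ⟨0, hn⟩ (Pp n m i.val))) +
      ∑ j : Fin n, (if h : j.val + 1 < n then
        x j ^ m (j.val + 1) *
          ((if i = ⟨j.val + 1, h⟩ then 1 else 0) +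
            pevalH n t x (Dk ⟨j.val + 1, h⟩ (Pp n m i.val)))
        else 0) := by
  have hV : Vv n i.val = MvPolynomial.X i := by rw [Vv, dif_pos i.isLt]
  have h0 := main_ind n hn m i.val i.isLt
  rw [Qq, hV, derivative_add, derivative_C, zero_add, DX_add, DX, DX] at h0
  have h1 := congrArg (pevalH n t x) h0
  rw [map_add, map_add, map_add, map_sum, map_sum, pevalH_Dk_CX] at h1
  have hpushC : ∀ j : Fin n,
      pevalH n t x (if h : j.val + 1 < n then
        C (MvPolynomial.X j ^ m (j.val + 1)) * Dk ⟨j.val + 1, h⟩ (C (MvPolynomial.X i))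
        else 0) =
      (if h : j.val + 1 < n then
        pevalH n t x (C (MvPolynomial.X j ^ m (j.val + 1)) *
          Dk ⟨j.val + 1, h⟩ (C (MvPolynomial.X i)))
        else 0) := by
    intro j; split
    · rfl
    · exact map_zero _
  have hpushP : ∀ j : Fin n,
      pevalH n t x (if h : j.val + 1 < n then
        C (MvPolynomial.X j ^ m (j.val + 1)) * Dk ⟨j.val + 1, h⟩ (Pp n m i.val)
        else 0) =
      (if h : j.val + 1 < n then
        pevalH n t x (C (MvPolynomial.X j ^ m (j.val + 1)) *
          Dk ⟨j.val + 1, h⟩ (Pp n m i.val))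
        else 0) := by
    intro j; split
    · rfl
    · exact map_zero _
  rw [Finset.sum_congr rfl fun j _ => hpushC j, Finset.sum_congr rfl fun j _ => hpushP j] at h1
  have hsplit : ∀ j : Fin n,
      (if h : j.val + 1 < n then
        x j ^ m (j.val + 1) *
          ((if i = ⟨j.val + 1, h⟩ then 1 else 0) +
            pevalH n t x (Dk ⟨j.val + 1, h⟩ (Pp n m i.val)))
        else 0) =
      (if h : j.val + 1 < n then
        pevalH n t x (C (MvPolynomial.X j ^ m (j.val + 1)) *
          Dk ⟨j.val + 1, h⟩ (C (MvPolynomial.X i)))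
        else 0) +
      (if h : j.val + 1 < n then
        pevalH n t x (C (MvPolynomial.X j ^ m (j.val + 1)) *
          Dk ⟨j.val + 1, h⟩ (Pp n m i.val))
        else 0) := by
    intro j
    split
    · rename_i h
      rw [map_mul, map_mul, pevalH_Dk_CX, pevalH_C, map_pow, MvPolynomial.eval_X]
      ring
    · rw [add_zero]
  rw [Finset.sum_congr rfl fun j _ => hsplit j, Finset.sum_add_distrib]
  rw [h1]
  abel

end ChainPf

/-- Proposition 4.2. -/
theorem chain_first_order_solution (n : ℕ) (hn : 1 ≤ n) (m : ℕ → ℕ)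
    (hm : ∀ i : ℕ, 1 ≤ i → i ≤ n - 1 → 0 < m i)
    (f : (Fin n → ℝ) → ℝ) (hf : ContDiff ℝ 1 f) :
    let U : ℝ → (Fin n → ℝ) → ℝ := fun t x =>
      f fun i => x i + etaChain m (fun k => if h : k < n then x ⟨k, h⟩ else 0) i.val t
    (∀ x : Fin n → ℝ, U 0 x = f x) ∧
    ∀ (t : ℝ) (x : Fin n → ℝ),
      deriv (fun τ => U τ x) t =
        deriv (fun s => U t (Function.update x (⟨0, hn⟩ : Fin n) s)) (x ⟨0, hn⟩) +
          ∑ j : Fin n,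
            if hj : j.val + 1 < n then
              (x j) ^ (m (j.val + 1)) *
                deriv (fun s => U t (Function.update x (⟨j.val + 1, hj⟩ : Fin n) s))
                  (x ⟨j.val + 1, hj⟩)
            else 0 := by
  intro U
  constructor
  · intro x
    show f (fun i => x i +
      etaChain m (fun k => if h : k < n then x ⟨k, h⟩ else 0) i.val 0) = f x
    congr 1
    funext i
    rw [etaChain_zero, add_zero]
  · intro t x
    have hU : ∀ (τ : ℝ) (y : Fin n → ℝ),
        U τ y = f (fun i => y i + pevalH n τ y (Pp n m i.val)) := by
      intro τ y
      show f (fun i => y i +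
        etaChain m (fun k => if h : k < n then y ⟨k, h⟩ else 0) i.val τ) = _
      congr 1
      funext i
      rw [eta_eq]
    simp only [hU]
    set F := fderiv ℝ f (fun i => x i + pevalH n t x (Pp n m i.val)) with hF
    have hfd : HasFDerivAt f F (fun i => x i + pevalH n t x (Pp n m i.val)) :=
      ((hf.differentiable one_ne_zero) _).hasFDerivAt
    -- time derivative
    have hT : HasDerivAt (fun τ => f (fun i => x i + pevalH n τ x (Pp n m i.val)))
        (F fun i => pevalH n t x (Polynomial.derivative (Pp n m i.val))) t := by
      refine HasFDerivAt.comp_hasDerivAt _ hfd ?_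
      refine hasDerivAt_pi.2 fun i => ?_
      exact (pevalH_hasDerivAt_t n t x (Pp n m i.val)).const_add (x i)
    -- space derivatives
    have hS : ∀ k : Fin n,
        HasDerivAt (fun s => f (fun i => Function.update x k s i +
            pevalH n t (Function.update x k s) (Pp n m i.val)))
          (F fun i => (if i = k then 1 else 0) + pevalH n t x (Dk k (Pp n m i.val)))
          (x k) := by
      intro k
      have houter : HasFDerivAt f F (fun i => Function.update x k (x k) i +
          pevalH n t (Function.update x k (x k)) (Pp n m i.val)) := by
        rw [Function.update_eq_self]
        exact hfd
      refine HasFDerivAt.comp_hasDerivAt _ houter ?_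
      refine hasDerivAt_pi.2 fun i => ?_
      have h1 : HasDerivAt (fun s => Function.update x k s i)
          (if i = k then 1 else 0) (x k) := by
        simp only [Function.update_apply]
        by_cases h : i = k
        · simpa [h] using hasDerivAt_id' (x k)
        · simpa [h] using hasDerivAt_const (x k) (x i)
      exact h1.add (pevalH_hasDerivAt_x n t x k (Pp n m i.val))
    have hSd : ∀ k : Fin n,
        deriv (fun s => f (fun i => Function.update x k s i +
            pevalH n t (Function.update x k s) (Pp n m i.val))) (x k) =
          F fun i => (if i = k then 1 else 0) + pevalH n t x (Dk k (Pp n m i.val)) :=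
      fun k => (hS k).deriv
    rw [hT.deriv]
    simp only [hSd]
    -- vector identity
    have hvec : (fun i => pevalH n t x (Polynomial.derivative (Pp n m i.val))) =
        (fun i => (if i = (⟨0, hn⟩ : Fin n) then 1 else 0) +
            pevalH n t x (Dk ⟨0, hn⟩ (Pp n m i.val))) +
          ∑ j : Fin n, (if h : j.val + 1 < n then
            (x j ^ m (j.val + 1)) • (fun i => (if i = (⟨j.val + 1, h⟩ : Fin n) then 1 else 0) +
              pevalH n t x (Dk ⟨j.val + 1, h⟩ (Pp n m i.val)))
            else 0) := by
      funext i
      simp only [Pi.add_apply, Finset.sum_apply]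
      rw [key n hn m t x i]
      congr 1
      refine Finset.sum_congr rfl fun j _ => ?_
      rw [dite_apply]
      split
      · rw [Pi.smul_apply, smul_eq_mul]
      · rw [Pi.zero_apply]
    rw [hvec, map_add, map_sum]
    congr 1
    refine Finset.sum_congr rfl fun j _ => ?_
    rw [apply_dite F]
    split
    · rw [map_smul, smul_eq_mul]
    · rw [map_zero]


end
end

section
/- Let T^d=(N,E,d) be a tree diagram with n nodes and let f:ℝ^n→ℝ be a continuously differentiable function. Define functions η_i of (t,x_1,…,x_n) recursively by η_1(t)=t and, for i≥2 with parent node ι_{p(i)} (the unique node with (ι_{p(i)},ι_i)∈E), η_i(t)=∫_0^t (x_{p(i)} + η_{p(i)}(y))^{d[(ι_{p(i)},ι_i)]} dy. Then u(t,x_1,…,x_n) = f(x_1+η_1(t), x_2+η_2(t), …, x_n+η_n(t)) satisfies the first-order evolution equation ∂_t u = ∂_{x_1}u + Σ_{(ι_i,ι_j)∈E} x_i^{d[(ι_i,ι_j)]} ∂_{x_j}u together with the initial condition u(0,x_1,…,x_n)=f(x_1,…,x_n). -/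
noncomputable section

attribute [local instance] LieRing.ofAssociativeRing

variable {n : ℕ} [NeZero n]

end

noncomputable section EtaAux
open Polynomial

def evalQ (Q : Polynomial (Polynomial ℝ)) (s t : ℝ) : ℝ :=
  (Q.map (evalRingHom s)).eval t

lemma evalQ_add (Q R : Polynomial (Polynomial ℝ)) (s t : ℝ) :
    evalQ (Q + R) s t = evalQ Q s t + evalQ R s t := by
  simp [evalQ]

lemma evalQ_pow (Q : Polynomial (Polynomial ℝ)) (w : ℕ) (s t : ℝ) :
    evalQ (Q ^ w) s t = (evalQ Q s t) ^ w := by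
  simp [evalQ]

lemma evalQ_CC (c : ℝ) (s t : ℝ) : evalQ (C (C c)) s t = c := by simp [evalQ]
lemma evalQ_CX (s t : ℝ) : evalQ (C X) s t = s := by simp [evalQ]
lemma evalQ_X (s t : ℝ) : evalQ X s t = t := by simp [evalQ]

lemma evalQ_zero_right (Q : Polynomial (Polynomial ℝ)) (s : ℝ) :
    evalQ Q s 0 = (Q.coeff 0).eval s := by
  rw [evalQ, ← coeff_zero_eq_eval_zero, coeff_map]
  rfl

lemma evalQ_sum_repr (Q : Polynomial (Polynomial ℝ)) {m : ℕ} (hm : Q.natDegree < m) (s t : ℝ) :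
    evalQ Q s t = ∑ k ∈ Finset.range m, (Q.coeff k).eval s * t ^ k := by
  rw [evalQ, eval_eq_sum_range' (lt_of_le_of_lt natDegree_map_le hm)]
  simp [coeff_map]

/-- coefficient-wise derivative -/
def cdP (Q : Polynomial (Polynomial ℝ)) : Polynomial (Polynomial ℝ) :=
  ∑ k ∈ Finset.range (Q.natDegree + 1), Polynomial.monomial k (derivative (Q.coeff k))

lemma cdP_coeff (Q : Polynomial (Polynomial ℝ)) (m : ℕ) :
    (cdP Q).coeff m = derivative (Q.coeff m) := by
  rw [cdP, finset_sum_coeff]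
  simp only [coeff_monomial]
  rw [Finset.sum_ite_eq' (Finset.range (Q.natDegree + 1)) m]
  by_cases hm : m ∈ Finset.range (Q.natDegree + 1)
  · rw [if_pos hm]
  · rw [if_neg hm, coeff_eq_zero_of_natDegree_lt, map_zero]
    simpa using hm

lemma cdP_natDegree_lt (Q : Polynomial (Polynomial ℝ)) : (cdP Q).natDegree < Q.natDegree + 1 := by
  have : (cdP Q).natDegree ≤ Q.natDegree := by
    rw [natDegree_le_iff_coeff_eq_zero]
    intro m hm
    rw [cdP_coeff, coeff_eq_zero_of_natDegree_lt hm, map_zero]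
  omega

lemma hasDerivAt_evalQ_s (Q : Polynomial (Polynomial ℝ)) (s t : ℝ) :
    HasDerivAt (fun u => evalQ Q u t) (evalQ (cdP Q) s t) s := by
  have key : (fun u => evalQ Q u t)
      = fun u => ∑ k ∈ Finset.range (Q.natDegree + 1), (Q.coeff k).eval u * t ^ k :=
    funext fun u => evalQ_sum_repr Q (Nat.lt_succ_self _) u t
  rw [key, evalQ_sum_repr (cdP Q) (cdP_natDegree_lt Q)]
  simp only [cdP_coeff]
  exact HasDerivAt.fun_sum fun k _ => ((Q.coeff k).hasDerivAt s).mul_const _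

lemma hasDerivAt_evalQ_t (Q : Polynomial (Polynomial ℝ)) (s t : ℝ) :
    HasDerivAt (fun u => evalQ Q s u) (evalQ (derivative Q) s t) t := by
  unfold evalQ
  have := (Q.map (evalRingHom s)).hasDerivAt t
  rwa [derivative_map] at this

/-- coefficient-level antiderivative -/
def adP (Q : Polynomial (Polynomial ℝ)) : Polynomial (Polynomial ℝ) :=
  ∑ k ∈ Finset.range (Q.natDegree + 1),
    Polynomial.monomial (k + 1) ((((k : ℝ) + 1)⁻¹) • Q.coeff k)

lemma adP_coeff_zero (Q : Polynomial (Polynomial ℝ)) : (adP Q).coeff 0 = 0 := by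
  rw [adP, finset_sum_coeff]
  simp [coeff_monomial]

lemma adP_coeff_succ (Q : Polynomial (Polynomial ℝ)) (m : ℕ) :
    (adP Q).coeff (m + 1) = ((m : ℝ) + 1)⁻¹ • Q.coeff m := by
  rw [adP, finset_sum_coeff]
  simp only [coeff_monomial, Nat.add_right_cancel_iff]
  rw [Finset.sum_ite_eq' (Finset.range (Q.natDegree + 1)) m]
  by_cases hm : m ∈ Finset.range (Q.natDegree + 1)
  · rw [if_pos hm]
  · rw [if_neg hm, coeff_eq_zero_of_natDegree_lt, smul_zero]
    simpa using hm

lemma derivative_adP (Q : Polynomial (Polynomial ℝ)) : derivative (adP Q) = Q := by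
  ext m
  rw [coeff_derivative, adP_coeff_succ, smul_eq_C_mul]
  have h1 : ((m : Polynomial ℝ) + 1) = C ((m : ℝ) + 1) := by
    rw [map_add, map_one, map_natCast]
  rw [h1, mul_comm (C (((m : ℝ) + 1)⁻¹)) (Q.coeff m), mul_assoc, ← map_mul,
    inv_mul_cancel₀ (by positivity), map_one, mul_one]

lemma derivative_cdP (Q : Polynomial (Polynomial ℝ)) :
    derivative (cdP Q) = cdP (derivative Q) := by
  ext m : 1
  rw [coeff_derivative, cdP_coeff, cdP_coeff, coeff_derivative]
  have h1 : ((m : Polynomial ℝ) + 1) = C ((m : ℝ) + 1) := by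
    rw [map_add, map_one, map_natCast]
  rw [h1, derivative_mul, derivative_C, mul_zero, add_zero]

lemma funeq_of_hasDerivAt {f g d : ℝ → ℝ}
    (hf : ∀ t, HasDerivAt f (d t) t) (hg : ∀ t, HasDerivAt g (d t) t)
    (h0 : f 0 = g 0) (t : ℝ) : f t = g t := by
  have hdiff : Differentiable ℝ (fun u => f u - g u) :=
    fun u => ((hf u).sub (hg u)).differentiableAt
  have hzero : ∀ u, deriv (fun u => f u - g u) u = 0 := by
    intro u
    rw [((hf u).fun_sub (hg u)).deriv]
    ring
  have h' : f t - g t = f 0 - g 0 := is_const_of_deriv_eq_zero hdiff hzero t 0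
  linarith


variable {n : ℕ} [NeZero n]

lemma etaTree_zero_def (T : TreeDiagram n) (x : Fin n → ℝ) : etaTree T x 0 = fun t => t := by
  rw [etaTree]
  simp

lemma etaTree_ne (T : TreeDiagram n) (x : Fin n → ℝ) {i : Fin n} (h : i ≠ 0) :
    etaTree T x i = fun t =>
      ∫ y in (0:ℝ)..t, (x (T.parent i) + etaTree T x (T.parent i) y) ^ (T.weight i) := by
  rw [etaTree]
  simp [h]

lemma etaTree_at_zero (T : TreeDiagram n) (x : Fin n → ℝ) (i : Fin n) :
    etaTree T x i 0 = 0 := by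
  by_cases h : i = 0
  · rw [h, etaTree_zero_def]
  · rw [etaTree_ne T x h]
    exact intervalIntegral.integral_same

/-- the PDE coefficients -/
def vco (T : TreeDiagram n) (x : Fin n → ℝ) (i : Fin n) : ℝ :=
  if i = 0 then 1 else x (T.parent i) ^ T.weight i

/-- partial derivative of `η_i` in `x_j` -/
def pdEta (T : TreeDiagram n) (i j : Fin n) (x : Fin n → ℝ) (t : ℝ) : ℝ :=
  deriv (fun s => etaTree T (Function.update x j s) i t) (x j)

/-- polynomiality package -/
def PkgB (T : TreeDiagram n) (i : Fin n) : Prop :=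
  ∀ (x : Fin n → ℝ) (j : Fin n), ∃ Q : Polynomial (Polynomial ℝ), Q.coeff 0 = 0 ∧
    ∀ s t, etaTree T (Function.update x j s) i t = evalQ Q s t

lemma pdEta_eq_of_rep {T : TreeDiagram n} {i : Fin n} {x : Fin n → ℝ} {j : Fin n}
    {Q : Polynomial (Polynomial ℝ)}
    (hQ : ∀ s t, etaTree T (Function.update x j s) i t = evalQ Q s t) (t : ℝ) :
    pdEta T i j x t = evalQ (cdP Q) (x j) t := by
  have hfun : (fun s => etaTree T (Function.update x j s) i t) = fun s => evalQ Q s t :=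
    funext fun s => hQ s t
  rw [pdEta, hfun]
  exact (hasDerivAt_evalQ_s Q (x j) t).deriv

lemma pkgC_of_B {T : TreeDiagram n} {i : Fin n} (hB : PkgB T i) :
    ∀ (x : Fin n → ℝ) (j : Fin n) (t : ℝ),
      HasDerivAt (fun s => etaTree T (Function.update x j s) i t) (pdEta T i j x t) (x j) := by
  intro x j t
  obtain ⟨Q, _, hQ⟩ := hB x j
  have hfun : (fun s => etaTree T (Function.update x j s) i t) = fun s => evalQ Q s t :=
    funext fun s => hQ s t
  rw [hfun, pdEta_eq_of_rep hQ]
  exact hasDerivAt_evalQ_s Q (x j) t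

lemma eta_continuous_of_B {T : TreeDiagram n} {i : Fin n} (hB : PkgB T i) (x : Fin n → ℝ) :
    Continuous (etaTree T x i) := by
  obtain ⟨Q, _, hQ⟩ := hB x 0
  have hfun : etaTree T x i = fun t => evalQ Q (x 0) t := by
    funext t
    conv_lhs => rw [← Function.update_eq_self 0 x]
    exact hQ (x 0) t
  rw [hfun]
  exact (show Continuous fun t => (Q.map (evalRingHom (x 0))).eval t from Polynomial.continuous _)

lemma hasDerivAt_etaTree {T : TreeDiagram n} {i : Fin n} (hi0 : i ≠ 0) (x : Fin n → ℝ)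
    (hcont : Continuous (etaTree T x (T.parent i))) (t : ℝ) :
    HasDerivAt (etaTree T x i)
      ((x (T.parent i) + etaTree T x (T.parent i) t) ^ T.weight i) t := by
  rw [etaTree_ne T x hi0]
  exact (((continuous_const.add hcont).pow _).integral_hasStrictDerivAt 0 t).hasDerivAt

lemma eta_pkg_zero (T : TreeDiagram n) :
    PkgB T 0 ∧ (∀ (x : Fin n → ℝ) (t : ℝ), HasDerivAt (etaTree T x 0)
      (vco T x 0 + ∑ j, vco T x j * pdEta T 0 j x t) t) := by
  have hB : PkgB T 0 := by
    intro x j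
    refine ⟨X, coeff_X_zero, ?_⟩
    intro s t
    rw [etaTree_zero_def, evalQ_X]
  refine ⟨hB, ?_⟩
  intro x t
  have hpd : ∀ j, pdEta T 0 j x t = 0 := by
    intro j
    have hfun : (fun s => etaTree T (Function.update x j s) 0 t) = fun _ => t := by
      funext s; rw [etaTree_zero_def]
    rw [pdEta, hfun, deriv_const]
  have hval : vco T x 0 + ∑ j, vco T x j * pdEta T 0 j x t = 1 := by
    simp [vco, hpd]
  rw [etaTree_zero_def, hval]
  exact hasDerivAt_id t
lemma eta_pkg_step (T : TreeDiagram n) {i : Fin n} (hi0 : i ≠ 0)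
    (hBp : PkgB T (T.parent i))
    (hDp : ∀ (x : Fin n → ℝ) (t : ℝ), HasDerivAt (etaTree T x (T.parent i))
      (vco T x (T.parent i) + ∑ j, vco T x j * pdEta T (T.parent i) j x t) t) :
    PkgB T i ∧ (∀ (x : Fin n → ℝ) (t : ℝ), HasDerivAt (etaTree T x i)
      (vco T x i + ∑ j, vco T x j * pdEta T i j x t) t) := by
  have hCp := pkgC_of_B hBp
  have hT : ∀ (x' : Fin n → ℝ) (t : ℝ), HasDerivAt (etaTree T x' i)
      ((x' (T.parent i) + etaTree T x' (T.parent i) t) ^ T.weight i) t := fun x' t =>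
    hasDerivAt_etaTree hi0 x' (eta_continuous_of_B hBp x') t
  have hB : PkgB T i := by
    intro x j
    obtain ⟨Qp, hQp0, hQp⟩ := hBp x j
    set A : Polynomial (Polynomial ℝ) :=
      if T.parent i = j then Polynomial.C X else Polynomial.C (Polynomial.C (x (T.parent i)))
      with hA
    have hAe : ∀ s t : ℝ, evalQ A s t = Function.update x j s (T.parent i) := by
      intro s t
      by_cases hpj : T.parent i = j
      · rw [hA, if_pos hpj, evalQ_CX, hpj, Function.update_self]
      · rw [hA, if_neg hpj, evalQ_CC, Function.update_of_ne hpj]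
    set I := (A + Qp) ^ T.weight i with hI
    have hIe : ∀ s t : ℝ, evalQ I s t
        = (Function.update x j s (T.parent i)
            + etaTree T (Function.update x j s) (T.parent i) t) ^ T.weight i := by
      intro s t
      rw [hI, evalQ_pow, evalQ_add, hAe, hQp]
    refine ⟨adP I, adP_coeff_zero I, ?_⟩
    intro s t
    refine funeq_of_hasDerivAt (f := fun t => etaTree T (Function.update x j s) i t)
      (g := fun t => evalQ (adP I) s t) (d := fun t => evalQ I s t) ?_ ?_ ?_ t
    · intro u
      have h1 := hT (Function.update x j s) u
      show HasDerivAt (fun t => etaTree T (Function.update x j s) i t) (evalQ I s u) u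
      rw [hIe s u]
      exact h1
    · intro u
      have h2 := hasDerivAt_evalQ_t (adP I) s u
      rwa [derivative_adP] at h2
    · show etaTree T (Function.update x j s) i 0 = evalQ (adP I) s 0
      rw [etaTree_at_zero, evalQ_zero_right, adP_coeff_zero, eval_zero]
  refine ⟨hB, ?_⟩
  intro x t₀
  have key : ∀ t, (x (T.parent i) + etaTree T x (T.parent i) t) ^ T.weight i
      = vco T x i + ∑ j, vco T x j * pdEta T i j x t := by
    choose Qf hQf0 hQf using hB x
    have f1 : ∀ (j : Fin n) (t : ℝ), pdEta T i j x t = evalQ (cdP (Qf j)) (x j) t :=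
      fun j t => pdEta_eq_of_rep (hQf j) t
    have f2 : ∀ j : Fin n, pdEta T i j x 0 = 0 := by
      intro j
      rw [f1, evalQ_zero_right, cdP_coeff, hQf0, map_zero, eval_zero]
    have hder : ∀ (j : Fin n) (s t : ℝ), evalQ (derivative (Qf j)) s t
        = (Function.update x j s (T.parent i)
            + etaTree T (Function.update x j s) (T.parent i) t) ^ T.weight i := by
      intro j s t
      have h1 := hasDerivAt_evalQ_t (Qf j) s t
      have h2 : HasDerivAt (fun t => evalQ (Qf j) s t)
          ((Function.update x j s (T.parent i)
            + etaTree T (Function.update x j s) (T.parent i) t) ^ T.weight i) t := by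
        have heq : (fun t => evalQ (Qf j) s t) = etaTree T (Function.update x j s) i :=
          funext fun t => (hQf j s t).symm
        rw [heq]
        exact hT _ t
      exact h1.unique h2
    have f3 : ∀ (j : Fin n) (t : ℝ), HasDerivAt (fun t => pdEta T i j x t)
        ((T.weight i : ℝ) * (x (T.parent i) + etaTree T x (T.parent i) t) ^ (T.weight i - 1)
          * ((if T.parent i = j then (1:ℝ) else 0) + pdEta T (T.parent i) j x t)) t := by
      intro j t
      have hfun : (fun t => pdEta T i j x t) = fun t => evalQ (cdP (Qf j)) (x j) t :=
        funext fun t => f1 j t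
      have h1 := hasDerivAt_evalQ_t (cdP (Qf j)) (x j) t
      rw [derivative_cdP] at h1
      have h2 : HasDerivAt (fun s => evalQ (derivative (Qf j)) s t)
          (evalQ (cdP (derivative (Qf j))) (x j) t) (x j) := hasDerivAt_evalQ_s _ _ t
      have h3 : HasDerivAt (fun s => evalQ (derivative (Qf j)) s t)
          ((T.weight i : ℝ) * (x (T.parent i) + etaTree T x (T.parent i) t) ^ (T.weight i - 1)
            * ((if T.parent i = j then (1:ℝ) else 0) + pdEta T (T.parent i) j x t)) (x j) := by
        have heq2 : (fun s => evalQ (derivative (Qf j)) s t)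
            = fun s => (Function.update x j s (T.parent i)
                + etaTree T (Function.update x j s) (T.parent i) t) ^ T.weight i :=
          funext fun s => hder j s t
        rw [heq2]
        have hinner : HasDerivAt
            (fun s => Function.update x j s (T.parent i)
              + etaTree T (Function.update x j s) (T.parent i) t)
            ((if T.parent i = j then (1:ℝ) else 0) + pdEta T (T.parent i) j x t) (x j) := by
          refine HasDerivAt.add ?_ (hCp x j t)
          by_cases hpj : T.parent i = j
          · have hu : (fun s => Function.update x j s (T.parent i)) = fun s => s := by
              funext s; rw [hpj, Function.update_self]
            rw [hu, if_pos hpj]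
            exact hasDerivAt_id _
          · have hu : (fun s => Function.update x j s (T.parent i)) = fun _ => x (T.parent i) := by
              funext s; rw [Function.update_of_ne hpj]
            rw [hu, if_neg hpj]
            exact hasDerivAt_const _ _
        have hpow := hinner.pow (T.weight i)
        rw [Function.update_eq_self] at hpow
        exact hpow
      have h4 := h2.unique h3
      rw [hfun, ← h4]
      exact h1
    refine funeq_of_hasDerivAt
      (f := fun t => (x (T.parent i) + etaTree T x (T.parent i) t) ^ T.weight i)
      (g := fun t => vco T x i + ∑ j, vco T x j * pdEta T i j x t)
      (d := fun t => (T.weight i : ℝ)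
        * (x (T.parent i) + etaTree T x (T.parent i) t) ^ (T.weight i - 1)
        * (vco T x (T.parent i) + ∑ j, vco T x j * pdEta T (T.parent i) j x t)) ?_ ?_ ?_
    · intro t
      exact ((hDp x t).const_add (x (T.parent i))).pow (T.weight i)
    · intro t
      have hsum : HasDerivAt (fun t => ∑ j, vco T x j * pdEta T i j x t)
          (∑ j, vco T x j *
            ((T.weight i : ℝ) * (x (T.parent i) + etaTree T x (T.parent i) t) ^ (T.weight i - 1)
              * ((if T.parent i = j then (1:ℝ) else 0) + pdEta T (T.parent i) j x t))) t :=
        HasDerivAt.fun_sum fun j _ => (f3 j t).const_mul (vco T x j)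
      have hall := hsum.const_add (vco T x i)
      refine HasDerivAt.congr_deriv hall ?_
      beta_reduce
      set W : ℝ := (T.weight i : ℝ)
        * (x (T.parent i) + etaTree T x (T.parent i) t) ^ (T.weight i - 1) with hW
      have expand : ∀ j : Fin n, vco T x j
            * (W * ((if T.parent i = j then (1:ℝ) else 0) + pdEta T (T.parent i) j x t))
          = (if T.parent i = j then W * vco T x j else 0)
            + W * (vco T x j * pdEta T (T.parent i) j x t) := by
        intro j
        by_cases hpj : T.parent i = j
        · rw [if_pos hpj, if_pos hpj]; ring
        · rw [if_neg hpj, if_neg hpj]; ring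
      rw [Finset.sum_congr rfl fun j _ => expand j, Finset.sum_add_distrib,
        Finset.sum_ite_eq Finset.univ (T.parent i) (fun j => W * vco T x j),
        if_pos (Finset.mem_univ _), ← Finset.mul_sum]
      ring
    · show (x (T.parent i) + etaTree T x (T.parent i) 0) ^ T.weight i
          = vco T x i + ∑ j, vco T x j * pdEta T i j x 0
      rw [etaTree_at_zero, add_zero]
      have hz : ∑ j, vco T x j * pdEta T i j x 0 = 0 :=
        Finset.sum_eq_zero fun j _ => by rw [f2]; ring
      rw [hz, add_zero, vco, if_neg hi0]
  have hfin := hT x t₀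
  rw [key t₀] at hfin
  exact hfin

lemma eta_pkg (T : TreeDiagram n) (i : Fin n) :
    PkgB T i ∧ (∀ (x : Fin n → ℝ) (t : ℝ), HasDerivAt (etaTree T x i)
      (vco T x i + ∑ j, vco T x j * pdEta T i j x t) t) := by
  suffices h : ∀ (k : ℕ) (i : Fin n), i.val ≤ k →
      (PkgB T i ∧ (∀ (x : Fin n → ℝ) (t : ℝ), HasDerivAt (etaTree T x i)
        (vco T x i + ∑ j, vco T x j * pdEta T i j x t) t)) from h i.val i le_rfl
  intro k
  induction k with
  | zero =>
    intro i hik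
    have hi0 : i = 0 := by
      apply Fin.ext
      simpa using Nat.le_zero.mp hik
    subst hi0
    exact eta_pkg_zero T
  | succ k IH =>
    intro i hik
    by_cases hi0 : i = 0
    · subst hi0
      exact eta_pkg_zero T
    · have hlt : (T.parent i).val < i.val := T.parent_lt i hi0
      obtain ⟨hBp, hDp⟩ := IH (T.parent i) (by omega)
      exact eta_pkg_step T hi0 hBp hDp
end EtaAux

noncomputable section

/-- Theorem 4.3. -/
theorem tree_first_order_solution (n : ℕ) [NeZero n] (T : TreeDiagram n)
    (f : (Fin n → ℝ) → ℝ) (hf : ContDiff ℝ 1 f) :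
    let U : ℝ → (Fin n → ℝ) → ℝ := fun t x => f fun i => x i + etaTree T x i t
    (∀ x : Fin n → ℝ, U 0 x = f x) ∧
    ∀ (t : ℝ) (x : Fin n → ℝ),
      deriv (fun τ => U τ x) t =
        deriv (fun s => U t (Function.update x 0 s)) (x 0) +
          ∑ j ∈ Finset.univ.filter (fun j : Fin n => j ≠ 0),
            (x (T.parent j)) ^ (T.weight j) *
              deriv (fun s => U t (Function.update x j s)) (x j) := by
  intro U
  have pkgB : ∀ i : Fin n, PkgB T i := fun i => (eta_pkg T i).1
  have pkgD : ∀ (i : Fin n) (x : Fin n → ℝ) (t : ℝ), HasDerivAt (etaTree T x i)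
      (vco T x i + ∑ j, vco T x j * pdEta T i j x t) t := fun i => (eta_pkg T i).2
  constructor
  · intro x
    show f (fun i => x i + etaTree T x i 0) = f x
    congr 1
    funext i
    rw [etaTree_at_zero, add_zero]
  · intro t x
    rw [Finset.filter_ne' Finset.univ (0 : Fin n)]
    set z : Fin n → ℝ := fun i => x i + etaTree T x i t with hz
    have hdf : HasFDerivAt f (fderiv ℝ f z) z := ((hf.differentiable one_ne_zero) z).hasFDerivAt
    set L := fderiv ℝ f z with hL
    have hgt : HasDerivAt (fun τ => fun i => x i + etaTree T x i τ)
        (fun i => vco T x i + ∑ j, vco T x j * pdEta T i j x t) t :=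
      hasDerivAt_pi.2 fun i => (pkgD i x t).const_add (x i)
    have hUt : HasDerivAt (fun τ => U τ x)
        (L (fun i => vco T x i + ∑ j, vco T x j * pdEta T i j x t)) t :=
      hdf.comp_hasDerivAt t hgt
    have hUx : ∀ j : Fin n, HasDerivAt (fun s => U t (Function.update x j s))
        (L (fun i => (if i = j then (1:ℝ) else 0) + pdEta T i j x t)) (x j) := by
      intro j
      have hgj : HasDerivAt (fun s => fun i => Function.update x j s i
            + etaTree T (Function.update x j s) i t)
          (fun i => (if i = j then (1:ℝ) else 0) + pdEta T i j x t) (x j) := by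
        refine hasDerivAt_pi.2 fun i => HasDerivAt.add ?_ (pkgC_of_B (pkgB i) x j t)
        by_cases hij : i = j
        · have hu : (fun s => Function.update x j s i) = fun s => s := by
            funext s; rw [hij, Function.update_self]
          rw [hu, if_pos hij]; exact hasDerivAt_id _
        · have hu : (fun s => Function.update x j s i) = fun _ => x i := by
            funext s; rw [Function.update_of_ne hij]
          rw [hu, if_neg hij]; exact hasDerivAt_const _ _
      have hpt : (fun i => Function.update x j (x j) i
          + etaTree T (Function.update x j (x j)) i t) = z := by
        rw [Function.update_eq_self]
      have hdf' : HasFDerivAt f L (fun i => Function.update x j (x j) i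
          + etaTree T (Function.update x j (x j)) i t) := by
        rw [hpt]; exact hdf
      exact hdf'.comp_hasDerivAt (x j) hgj
    rw [hUt.deriv, (hUx 0).deriv]
    rw [Finset.sum_congr rfl (fun j hj => by
      rw [(hUx j).deriv,
        show x (T.parent j) ^ T.weight j = vco T x j from by
          rw [vco, if_neg (Finset.mem_erase.mp hj).1]])]
    -- turn scalar multiples into L of smul
    rw [Finset.sum_congr rfl (fun j _ => by
      rw [show vco T x j * L (fun i => (if i = j then (1:ℝ) else 0) + pdEta T i j x t)
          = L (vco T x j • fun i => (if i = j then (1:ℝ) else 0) + pdEta T i j x t) from by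
        rw [map_smul, smul_eq_mul]])]
    rw [← map_sum L, ← map_add L]
    congr 1
    funext i
    rw [Pi.add_apply, Finset.sum_apply]
    simp only [Pi.smul_apply, smul_eq_mul, mul_add, mul_ite, mul_one, mul_zero]
    rw [Finset.sum_add_distrib,
      Finset.sum_ite_eq (Finset.univ.erase (0 : Fin n)) i (fun j => vco T x j),
      ← Finset.add_sum_erase Finset.univ (fun j => vco T x j * pdEta T i j x t)
        (Finset.mem_univ (0 : Fin n))]
    have h00 : vco T x 0 = 1 := by rw [vco, if_pos rfl]
    by_cases hi : i = 0
    · subst hi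
      simp only [Finset.mem_erase, ne_eq, not_true_eq_false, false_and, if_false, if_pos rfl,
        h00, if_true]
      ring
    · simp only [Finset.mem_erase, ne_eq, hi, not_false_eq_true, Finset.mem_univ, and_self,
        if_true, if_neg hi, h00]
      simp only [h00, Finset.sum_erase_eq_sub (Finset.mem_univ (0 : Fin n))]
      rw [show (if False then (1:ℝ) else 0) = 0 by norm_num]
      ring

end
end

section
/- Let n≥1 and m_1,…,m_n be positive integers. For w=(w_1,…,w_n)∈ℂ^n define polynomials in t by ξ̃_n(t,w)=t·w_n^{m_n} and, for i=n−1 down to 1, ξ̃_i(t,w)=∫_0^t (w_i + ξ̃_{i+1}(y,w))^{m_i} dy. Then the complex-valued function u_w(t,x_1,…,x_n) = exp( ξ̃_1(t,w) + Σ_{i=2}^n x_{i−1}·ξ̃_i(t,w) + Σ_{j=1}^n w_j x_j ) satisfies the evolution equation ∂_t u_w = ∂_{x_1}^{m_1}u_w + Σ_{i=1}^{n−1} x_i ∂_{x_{i+1}}^{m_{i+1}} u_w, and u_w(0,x) = exp(Σ_{j=1}^n w_j x_j). (These functions are the building blocks of the Fourier-series solution of the generalized heat conduction equation of chain type.) 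-/
noncomputable section

attribute [local instance 100] LieRing.ofAssociativeRing

variable {n : ℕ} [NeZero n]

end

noncomputable section

noncomputable section



/-- formal derivative of xiRev -/
noncomputable def xiDer (n : ℕ) (m : ℕ → ℕ) (w : ℕ → ℂ) : ℕ → ℝ → ℂ
  | 0 => fun _ => (w (n-1)) ^ (m n)
  | (k+1) => fun t => (w (n-k-2) + xiRev n m w k t) ^ (m (n-k-1))

lemma xiRev_hasDerivAt (n : ℕ) (m : ℕ → ℕ) (w : ℕ → ℂ) :
    ∀ k (t : ℝ), HasDerivAt (xiRev n m w k) (xiDer n m w k t) t := by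
  intro k
  induction k with
  | zero =>
    intro t
    simpa [xiRev, xiDer] using
      (Complex.ofRealCLM.hasDerivAt (x := t)).mul_const ((w (n-1)) ^ (m n))
  | succ k ih =>
    have hd : Differentiable ℝ (xiRev n m w k) := fun t => (ih t).differentiableAt
    have hcont : Continuous (xiRev n m w k) := hd.continuous
    intro t
    have hfc : Continuous (fun y => (w (n-k-2) + xiRev n m w k y) ^ (m (n-k-1))) :=
      (continuous_const.add hcont).pow _
    have := intervalIntegral.integral_hasDerivAt_right
      (hfc.intervalIntegrable 0 t) (hfc.stronglyMeasurableAtFilter _ _) hfc.continuousAt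
    simpa [xiRev, xiDer] using this

lemma xiRev_zero (n : ℕ) (m : ℕ → ℕ) (w : ℕ → ℂ) : ∀ k, xiRev n m w k 0 = 0 := by
  intro k; cases k <;> simp [xiRev]

lemma xiDer_eq (n : ℕ) (m : ℕ → ℕ) (w : ℕ → ℂ) (t : ℝ) (i : ℕ) (h1 : 1 ≤ i) (h2 : i ≤ n) :
    xiDer n m w (n-i) t
      = (w (i-1) + (if i < n then xiRev n m w (n-i-1) t else 0)) ^ (m i) := by
  rcases eq_or_lt_of_le h2 with rfl | hlt
  · simp [xiDer, Nat.sub_self]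
  · have hk : n - i = (n - i - 1) + 1 := by omega
    conv_lhs => rw [hk]
    have e1 : n - (n-i-1) - 2 = i - 1 := by omega
    have e2 : n - (n-i-1) - 1 = i := by omega
    simp only [xiDer, e1, e2, if_pos hlt]

lemma iteratedDeriv_cexp_affine (a b : ℂ) (k : ℕ) :
    iteratedDeriv k (fun s : ℝ => Complex.exp (a + b * s)) =
      fun s : ℝ => b ^ k * Complex.exp (a + b * s) := by
  induction k with
  | zero => simp
  | succ k ih =>
    rw [iteratedDeriv_succ, ih]
    funext s
    have h1 : HasDerivAt (fun s : ℝ => a + b * (s : ℂ)) b s := by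
      simpa using ((Complex.ofRealCLM.hasDerivAt (x := s)).const_mul b).const_add a
    have h2 := (h1.cexp.const_mul (b ^ k)).deriv
    rw [h2]; ring

lemma sum_update_coe {n : ℕ} (x : Fin n → ℝ) (p : Fin n) (s : ℝ) (c : Fin n → ℂ) :
    ∑ j : Fin n, (↑(Function.update x p s j):ℂ) * c j
      = (∑ j : Fin n, (↑(x j):ℂ) * c j) + ((s:ℂ) - (x p:ℂ)) * c p := by
  have h : ∀ j : Fin n, (↑(Function.update x p s j):ℂ) * c j
      = (↑(x j):ℂ) * c j + (if j = p then ((s:ℂ) - (x p:ℂ)) * c p else 0) := by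
    intro j
    rcases eq_or_ne j p with rfl | hj
    · simp [Function.update_self]; ring
    · simp [Function.update_of_ne hj, hj]
  simp only [h, Finset.sum_add_distrib, Finset.sum_ite_eq', Finset.mem_univ, if_true]

lemma sum_icc_eq {n : ℕ} (g : ℕ → ℂ) (y : Fin n → ℝ) :
    ∑ i ∈ Finset.Icc 2 n, ((if h : i-2 < n then y ⟨i-2,h⟩ else 0 : ℝ):ℂ) * g i
      = ∑ j : Fin n, ((y j :ℝ):ℂ) * (if j.val+2 ≤ n then g (j.val+2) else 0) := by
  set F : ℕ → ℂ := fun q =>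
    ((if h : q < n then y ⟨q,h⟩ else 0 : ℝ):ℂ) * (if q+2 ≤ n then g (q+2) else 0) with hF
  have hR : ∑ j : Fin n, ((y j :ℝ):ℂ) * (if j.val+2 ≤ n then g (j.val+2) else 0)
      = ∑ q ∈ Finset.range n, F q := by
    rw [← Fin.sum_univ_eq_sum_range F n]
    exact Finset.sum_congr rfl fun j _ => by simp [hF, j.isLt]
  have hR2 : ∑ q ∈ Finset.range n, F q = ∑ q ∈ Finset.range (n-1), F q := by
    refine (Finset.sum_subset (Finset.range_subset_range.2 (Nat.sub_le n 1)) ?_).symm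
    intro q hq hq'
    simp only [Finset.mem_range] at hq hq'
    have : ¬ (q + 2 ≤ n) := by omega
    simp [hF, this]
  have hL : ∑ i ∈ Finset.Icc 2 n, ((if h : i-2 < n then y ⟨i-2,h⟩ else 0 : ℝ):ℂ) * g i
      = ∑ q ∈ Finset.range (n-1), F q := by
    rw [← Finset.Ico_add_one_right_eq_Icc, Finset.sum_Ico_eq_sum_range]
    refine Finset.sum_congr rfl ?_
    intro q hq
    simp only [Finset.mem_range] at hq
    have h1 : 2 + q - 2 = q := by omega
    have h2 : q < n := by omega
    have h3 : q + 2 ≤ n := by omega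
    have h4 : 2 + q = q + 2 := by omega
    simp [hF, h1, h2, h3, h4]
  rw [hL, hR, hR2]

/-- the exponent -/
noncomputable def ExA (n : ℕ) (m : ℕ → ℕ) (w' : ℕ → ℂ) (w : Fin n → ℂ)
    (τ : ℝ) (y : Fin n → ℝ) : ℂ :=
  xiRev n m w' (n - 1) τ +
    (∑ i ∈ Finset.Icc 2 n,
      ((if h : i - 2 < n then y ⟨i - 2, h⟩ else 0 : ℝ) : ℂ) * xiRev n m w' (n - i) τ) +
    ∑ j : Fin n, w j * (y j : ℂ)

/-- coefficient of coordinate p in the exponent -/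
noncomputable def BcA (n : ℕ) (m : ℕ → ℕ) (w' : ℕ → ℂ) (w : Fin n → ℂ)
    (t : ℝ) (p : Fin n) : ℂ :=
  w p + (if p.val + 2 ≤ n then xiRev n m w' (n - (p.val + 2)) t else 0)

lemma ExA_eq (n : ℕ) (m : ℕ → ℕ) (w' : ℕ → ℂ) (w : Fin n → ℂ) (τ : ℝ) (y : Fin n → ℝ) :
    ExA n m w' w τ y = xiRev n m w' (n-1) τ +
      ∑ j : Fin n, ((y j : ℝ):ℂ) *
        ((if j.val+2 ≤ n then xiRev n m w' (n-(j.val+2)) τ else 0) + w j) := by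
  unfold ExA
  rw [sum_icc_eq (fun i => xiRev n m w' (n - i) τ) y]
  have h : ∀ j : Fin n, ((y j : ℝ):ℂ) *
      ((if j.val+2 ≤ n then xiRev n m w' (n-(j.val+2)) τ else 0) + w j)
      = ((y j : ℝ):ℂ) * (if j.val+2 ≤ n then xiRev n m w' (n-(j.val+2)) τ else 0)
        + w j * ((y j : ℝ):ℂ) := fun j => by ring
  rw [Finset.sum_congr rfl fun j _ => h j, Finset.sum_add_distrib]
  ring

lemma ExA_update (n : ℕ) (m : ℕ → ℕ) (w' : ℕ → ℂ) (w : Fin n → ℂ) (t : ℝ)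
    (x : Fin n → ℝ) (p : Fin n) (s : ℝ) :
    ExA n m w' w t (Function.update x p s)
      = ExA n m w' w t x + ((s:ℂ) - (x p : ℂ)) * BcA n m w' w t p := by
  rw [ExA_eq, ExA_eq, sum_update_coe]
  unfold BcA
  ring

lemma ExA_hasDerivAt (n : ℕ) (m : ℕ → ℕ) (w' : ℕ → ℂ) (w : Fin n → ℂ)
    (t : ℝ) (x : Fin n → ℝ) :
    HasDerivAt (fun τ => ExA n m w' w τ x)
      (xiDer n m w' (n-1) t +
        ∑ j : Fin n, ((x j : ℝ):ℂ) *
          (if j.val+2 ≤ n then xiDer n m w' (n-(j.val+2)) t else 0)) t := by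
  have h1 : HasDerivAt (fun τ => ExA n m w' w τ x)
      (xiDer n m w' (n-1) t + ∑ i ∈ Finset.Icc 2 n,
        ((if h : i - 2 < n then x ⟨i - 2, h⟩ else 0 : ℝ) : ℂ) * xiDer n m w' (n - i) t) t := by
    exact ((xiRev_hasDerivAt n m w' (n-1) t).add
      (HasDerivAt.fun_sum fun i _ => (xiRev_hasDerivAt n m w' (n-i) t).const_mul _)).add_const _
  rwa [sum_icc_eq (fun i => xiDer n m w' (n - i) t) x] at h1

end

/-- building blocks of Theorem 5.1. -/
theorem chain_heat_building_blocks (n : ℕ) (hn : 1 ≤ n) (m : ℕ → ℕ)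
    (hm : ∀ i : ℕ, 1 ≤ i → i ≤ n → 0 < m i) (w : Fin n → ℂ) :
    let w' : ℕ → ℂ := fun k => if h : k < n then w ⟨k, h⟩ else 0
    let U : ℝ → (Fin n → ℝ) → ℂ := fun t x =>
      Complex.exp (xiRev n m w' (n - 1) t +
        (∑ i ∈ Finset.Icc 2 n,
          ((if h : i - 2 < n then x ⟨i - 2, h⟩ else 0 : ℝ) : ℂ) * xiRev n m w' (n - i) t) +
        ∑ j : Fin n, w j * (x j : ℂ))
    (∀ x : Fin n → ℝ, U 0 x = Complex.exp (∑ j : Fin n, w j * (x j : ℂ))) ∧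
    ∀ (t : ℝ) (x : Fin n → ℝ),
      deriv (fun τ => U τ x) t =
        iteratedDeriv (m 1) (fun s => U t (Function.update x (⟨0, hn⟩ : Fin n) s))
            (x ⟨0, hn⟩) +
          ∑ j : Fin n,
            if hj : j.val + 1 < n then
              (x j : ℂ) *
                iteratedDeriv (m (j.val + 2))
                  (fun s => U t (Function.update x (⟨j.val + 1, hj⟩ : Fin n) s))
                  (x ⟨j.val + 1, hj⟩)
            else 0 := by
  intro w' U
  have hU : ∀ (τ : ℝ) (y : Fin n → ℝ), U τ y = Complex.exp (ExA n m w' w τ y) :=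
    fun _ _ => rfl
  constructor
  · intro x
    rw [hU]
    have hz : ∀ k, xiRev n m w' k (0:ℝ) = 0 := xiRev_zero n m w'
    simp [ExA, hz]
  · intro t x
    have spatial : ∀ (p : Fin n) (K : ℕ),
        iteratedDeriv K (fun s => U t (Function.update x p s)) (x p)
          = (BcA n m w' w t p) ^ K * U t x := by
      intro p K
      have hfun : (fun s : ℝ => U t (Function.update x p s))
          = fun s : ℝ => Complex.exp ((ExA n m w' w t x - (x p : ℂ) * BcA n m w' w t p)
              + BcA n m w' w t p * (s:ℂ)) := by
        funext s
        rw [hU, ExA_update]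
        congr 1
        ring
      rw [hfun, iteratedDeriv_cexp_affine]
      have he : (ExA n m w' w t x - (x p : ℂ) * BcA n m w' w t p)
          + BcA n m w' w t p * ((x p : ℝ):ℂ) = ExA n m w' w t x := by ring
      beta_reduce
      rw [he, ← hU]
    have hBD : ∀ p : Fin n,
        xiDer n m w' (n - (p.val+1)) t = (BcA n m w' w t p) ^ (m (p.val+1)) := by
      intro p
      have hw : w' p.val = w p := by
        show (if h : p.val < n then w ⟨p.val, h⟩ else 0) = w p
        simp [p.isLt]
      rw [xiDer_eq n m w' t (p.val+1) (Nat.le_add_left 1 p.val) p.isLt]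
      unfold BcA
      simp only [Nat.add_sub_cancel]
      by_cases hc : p.val + 1 < n
      · rw [if_pos hc, if_pos (show p.val+2 ≤ n by omega),
          show n - (p.val+1) - 1 = n - (p.val+2) from by omega, hw]
      · rw [if_neg hc, if_neg (show ¬ p.val+2 ≤ n by omega), hw]
    have htime := (ExA_hasDerivAt n m w' w t x).cexp
    have h2 : (fun τ => U τ x) = fun τ => Complex.exp (ExA n m w' w τ x) :=
      funext fun τ => hU τ x
    have hderiv : deriv (fun τ => U τ x) t
        = (xiDer n m w' (n-1) t +
            ∑ j : Fin n, ((x j : ℝ):ℂ) *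
              (if j.val+2 ≤ n then xiDer n m w' (n-(j.val+2)) t else 0)) * U t x := by
      rw [h2, htime.deriv, hU t x]
      ring
    have hsum : (∑ j : Fin n, if hj : j.val + 1 < n then (x j : ℂ) *
          iteratedDeriv (m (j.val + 2))
            (fun s => U t (Function.update x (⟨j.val + 1, hj⟩ : Fin n) s))
            (x ⟨j.val + 1, hj⟩) else 0)
        = ∑ j : Fin n, ((x j : ℝ):ℂ) *
            (if j.val+2 ≤ n then xiDer n m w' (n-(j.val+2)) t else 0) * U t x := by
      refine Finset.sum_congr rfl ?_
      intro j _
      by_cases hj : j.val + 1 < n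
      · rw [dif_pos hj, spatial ⟨j.val+1,hj⟩ (m (j.val+2))]
        have h3 : xiDer n m w' (n - (j.val+2)) t
            = BcA n m w' w t ⟨j.val+1,hj⟩ ^ (m (j.val+2)) := hBD ⟨j.val+1,hj⟩
        rw [if_pos (show j.val+2 ≤ n by omega), h3]
        ring
      · rw [dif_neg hj, if_neg (show ¬ j.val+2 ≤ n by omega)]
        simp
    rw [hderiv, spatial ⟨0,hn⟩ (m 1), hsum]
    have hA : xiDer n m w' (n-1) t = BcA n m w' w t ⟨0,hn⟩ ^ (m 1) := hBD ⟨0,hn⟩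
    rw [hA, add_mul, Finset.sum_mul]


end
end
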